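/- arXiv:math/0011092 — 2 statements merged into one kernel-verified Lean document; each statement's English description precedes it below -/
import Mathlib

section
/- Let G = (V,E) be a finite connected graph. For every 0 < x ≤ 1/2, the minimum in the definition of the size-restricted Cheeger constant φ(x) = min{ φ_A : 0 < π(A) ≤ x } is attained at a set A that is connected in G. Moreover, the minimum in the definition of the Cheeger constant φ = inf{ φ_A : 0 < π(A) ≤ 1/2 } is attained at a set A such that both A and its complement V \ A are connected in G. -/
open MeasureTheory Filter
open scoped ENNReal Classical

noncomputable section

/-- Vertices of `ℤ^d`. -/
abbrev Vert (d : ℕ) := Fin d → ℤ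

/-- (Oriented) edges of `ℤ^d`: `(v, i)` is the edge from `v` to `v + eᵢ`. -/
abbrev EdgeZ (d : ℕ) := Vert d × Fin d

def unitVec (d : ℕ) (i : Fin d) : Vert d := fun j => if j = i then 1 else 0

/-- Second endpoint of an edge. -/
def edgeSnd {d : ℕ} (e : EdgeZ d) : Vert d := e.1 + unitVec d e.2

/-- The box `{-n, …, n}^d`. -/
def boxFinset (d n : ℕ) : Finset (Vert d) :=
  Fintype.piFinset fun _ => Finset.Icc (-(n : ℤ)) (n : ℤ)

/-- The edges of the box `B_d(n)`. -/
def boxEdgeFinset (d n : ℕ) : Finset (EdgeZ d) :=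
  (boxFinset d n ×ˢ (Finset.univ : Finset (Fin d))).filter fun e => edgeSnd e ∈ boxFinset d n

/-- ℓ¹ distance on `ℤ^d`. -/
def l1dist {d : ℕ} (v w : Vert d) : ℤ := ∑ i, |v i - w i|

/-- Lattice adjacency: ℓ¹ distance one. -/
def latAdj {d : ℕ} (v w : Vert d) : Prop := l1dist v w = 1

/-- Bernoulli(p) measure on `Bool`. -/
def bern (p : ℝ) : Measure Bool :=
  (PMF.bernoulli (min (Real.toNNReal p) 1) (min_le_right _ _)).toMeasure

instance (p : ℝ) : IsProbabilityMeasure (bern p) := by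
  unfold bern; infer_instance

/-- Bernoulli bond percolation on the box `B_d(n)`: the edges of the box are
open independently with probability `p`; edges outside the box are closed. -/
def bondMeasure (d n : ℕ) (p : ℝ) : Measure (EdgeZ d → Bool) :=
  (Measure.pi fun _ : {e // e ∈ boxEdgeFinset d n} => bern p).map
    fun ω e => if h : e ∈ boxEdgeFinset d n then ω ⟨e, h⟩ else false

/-- Bernoulli site percolation on the box `B_d(n)`. -/
def siteMeasure (d n : ℕ) (p : ℝ) : Measure (Vert d → Bool) :=
  (Measure.pi fun _ : {v // v ∈ boxFinset d n} => bern p).map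
    fun η v => if h : v ∈ boxFinset d n then η ⟨v, h⟩ else false

/-- Two vertices joined by an open edge of the box `B_d(n)`. -/
def openAdj (d n : ℕ) (ω : EdgeZ d → Bool) (v w : Vert d) : Prop :=
  ∃ e ∈ boxEdgeFinset d n, ω e = true ∧
    ((e.1 = v ∧ edgeSnd e = w) ∨ (e.1 = w ∧ edgeSnd e = v))

/-- Connectivity by open edges inside the box. -/
def openConn (d n : ℕ) (ω : EdgeZ d → Bool) : Vert d → Vert d → Prop :=
  Relation.ReflTransGen (openAdj d n ω)

/-- The open cluster of `v` inside the box `B_d(n)`. -/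
def cluster (d n : ℕ) (ω : EdgeZ d → Bool) (v : Vert d) : Finset (Vert d) :=
  (boxFinset d n).filter fun w => openConn d n ω v w

/-- Number of open edges with both endpoints in `C`. -/
def openEdgeCount (d n : ℕ) (ω : EdgeZ d → Bool) (C : Finset (Vert d)) : ℕ :=
  ((boxEdgeFinset d n).filter fun e => ω e = true ∧ e.1 ∈ C ∧ edgeSnd e ∈ C).card

def IsCluster (d n : ℕ) (ω : EdgeZ d → Bool) (C : Finset (Vert d)) : Prop :=
  ∃ v ∈ boxFinset d n, C = cluster d n ω v

/-- `C` is an open cluster of `B_d(n)` with the maximal number of open edges,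
i.e. `C = 𝒞_d(n)`. -/
def IsLargestCluster (d n : ℕ) (ω : EdgeZ d → Bool) (C : Finset (Vert d)) : Prop :=
  IsCluster d n ω C ∧
    ∀ C', IsCluster d n ω C' → openEdgeCount d n ω C' ≤ openEdgeCount d n ω C

/-- Number of open edges with one endpoint in `A` and the other in `B`. -/
def openEdgesBetween (d n : ℕ) (ω : EdgeZ d → Bool) (A B : Finset (Vert d)) : ℕ :=
  ((boxEdgeFinset d n).filter fun e => ω e = true ∧
    ((e.1 ∈ A ∧ edgeSnd e ∈ B) ∨ (e.1 ∈ B ∧ edgeSnd e ∈ A))).card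

section WalkDefs

variable {V : Type*} [DecidableEq V]

/-- Degree of `x` in the graph with vertex set `C` and adjacency relation `R`. -/
def rDeg (R : V → V → Prop) (C : Finset V) (x : V) : ℕ := (C.filter fun w => R x w).card

/-- Sum of the degrees (twice the number of edges). -/
def rTotal (R : V → V → Prop) (C : Finset V) : ℕ := ∑ x ∈ C, rDeg R C x

/-- Stationary probability of the set `A` for simple random walk: `π(A) = Σ_{x∈A} deg x / Σ_y deg y`. -/
def piSet (R : V → V → Prop) (C A : Finset V) : ℝ :=
  (∑ x ∈ A, (rDeg R C x : ℝ)) / (rTotal R C : ℝ)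

/-- Stationary probability of a vertex: `π(x) = deg x / Σ_y deg y`. -/
def piVert (R : V → V → Prop) (C : Finset V) (x : V) : ℝ :=
  (rDeg R C x : ℝ) / (rTotal R C : ℝ)

/-- `Q(A,B)`: the number of edges from `A` to `B`, each with weight `1/Σ_y deg y`. -/
def qBetween (R : V → V → Prop) (C A B : Finset V) : ℝ :=
  (∑ a ∈ A, ((B.filter fun b => R a b).card : ℝ)) / (rTotal R C : ℝ)

/-- Conductance `φ_A = Q(A, Aᶜ) / (π(A) π(Aᶜ))` of a set `A` in the graph `(C, R)`. -/
def conductance (R : V → V → Prop) (C A : Finset V) : ℝ :=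
  qBetween R C A (C \ A) / (piSet R C A * piSet R C (C \ A))

/-- The Cheeger constant `φ = inf {φ_A : 0 < π(A) ≤ 1/2}`. -/
def cheeger (R : V → V → Prop) (C : Finset V) : ℝ :=
  sInf {r : ℝ | ∃ A : Finset V, A ⊆ C ∧ 0 < piSet R C A ∧ piSet R C A ≤ 1 / 2 ∧
    r = conductance R C A}

/-- The size-restricted Cheeger constant `φ(x) = min {φ_A : 0 < π(A) ≤ x}`. -/
def cheegerAt (R : V → V → Prop) (C : Finset V) (x : ℝ) : ℝ :=
  sInf {r : ℝ | ∃ A : Finset V, A ⊆ C ∧ 0 < piSet R C A ∧ piSet R C A ≤ x ∧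
    r = conductance R C A}

/-- A finite set `S` is connected for the relation `R` (within `S`). -/
def ConnectedOn (R : V → V → Prop) (S : Finset V) : Prop :=
  S.Nonempty ∧ ∀ v ∈ S, ∀ w ∈ S,
    Relation.ReflTransGen (fun a b => a ∈ S ∧ b ∈ S ∧ R a b) v w

/-- The generator `Q` of continuous-time simple random walk on the graph `(C, R)`:
`Q_{xy} = 1/deg x` if `x ~ y`, `Q_{xx} = -1`, and `0` otherwise. -/
def walkGen (R : V → V → Prop) (C : Finset V) : Matrix {y // y ∈ C} {y // y ∈ C} ℝ :=
  Matrix.of fun x y =>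
    if (x : V) = (y : V) then -1
    else if R (x : V) (y : V) then ((rDeg R C (x : V) : ℝ))⁻¹ else 0

end WalkDefs

/-- The heat kernel `π^t_x(y) = (exp (t Q))_{x y}` of the continuous-time walk. -/
def heatKernel {W : Type*} [Fintype W] [DecidableEq W] (Q : Matrix W W ℝ) (t : ℝ)
    (x y : W) : ℝ :=
  ∑' k : ℕ, (t ^ k / (Nat.factorial k : ℝ)) * (Q ^ k) x y

/-- Total variation distance between two (densities of) measures on `W`. -/
def tvDist {W : Type*} [Fintype W] (f g : W → ℝ) : ℝ := (∑ x, |f x - g x|) / 2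

/-- The total-variation mixing time
`τ₁ = inf {t : sup_{x,y} d_V(π^t_x, π^t_y) ≤ e⁻¹}`. -/
def mixTime {W : Type*} [Fintype W] [DecidableEq W] (Q : Matrix W W ℝ) : ℝ :=
  sInf {t : ℝ | 0 ≤ t ∧
    ∀ x y : W, tvDist (heatKernel Q t x) (heatKernel Q t y) ≤ Real.exp (-1)}

/-- The second eigenvalue `λ₂ < 0` of the generator `Q`. -/
def lambda2 {W : Type*} [Fintype W] [DecidableEq W] (Q : Matrix W W ℝ) : ℝ :=
  sSup {l : ℝ | l < 0 ∧ Module.End.HasEigenvalue (Matrix.toLin' Q) l}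

/-- The relaxation time `τ₂ = -1/λ₂`. -/
def relaxTime {W : Type*} [Fintype W] [DecidableEq W] (Q : Matrix W W ℝ) : ℝ :=
  -(lambda2 Q)⁻¹

/-- Mixing time of the simple random walk on a cluster `C` of bond percolation on `B_d(n)`. -/
def clusterMixTime (d n : ℕ) (ω : EdgeZ d → Bool) (C : Finset (Vert d)) : ℝ :=
  mixTime (walkGen (openAdj d n ω) C)

/-- The event that the origin is connected to the boundary of the box `B_d(n)` by an
open path (inside the box). -/
def crossEvent (d n : ℕ) : Set (EdgeZ d → Bool) :=
  {ω | ∃ w ∈ boxFinset d n, (∃ i, |w i| = (n : ℤ)) ∧ openConn d n ω 0 w}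

/-- `θ(p)`, the probability that the origin percolates: the decreasing limit of the
probabilities of crossing the box `B_d(n)`. -/
def theta (d : ℕ) (p : ℝ) : ℝ≥0∞ := ⨅ n : ℕ, bondMeasure d n p (crossEvent d n)

/-- The critical parameter `p_c(ℤ^d)` for Bernoulli bond percolation. -/
def pc (d : ℕ) : ℝ := sSup {p : ℝ | 0 ≤ p ∧ p ≤ 1 ∧ theta d p = 0}

/-- `μ` is Bernoulli(p) bond percolation on all of `ℤ^d`: the cylinder events have the
right probabilities. -/
def IsBernoulliPerc (d : ℕ) (p : ℝ) (μ : Measure (EdgeZ d → Bool)) : Prop :=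
  IsProbabilityMeasure μ ∧
    ∀ (s : Finset (EdgeZ d)) (f : EdgeZ d → Bool),
      μ {ω | ∀ e ∈ s, ω e = f e} =
        ∏ e ∈ s, (if f e then ENNReal.ofReal p else ENNReal.ofReal (1 - p))

/-- Adjacency by an open edge, anywhere in `ℤ^d`. -/
def fullOpenAdj (d : ℕ) (ω : EdgeZ d → Bool) (v w : Vert d) : Prop :=
  ∃ e : EdgeZ d, ω e = true ∧ ((e.1 = v ∧ edgeSnd e = w) ∨ (e.1 = w ∧ edgeSnd e = v))

/-- The open cluster of `v` in the full lattice `ℤ^d`. -/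
def fullCluster (d : ℕ) (ω : EdgeZ d → Bool) (v : Vert d) : Set (Vert d) :=
  {w | Relation.ReflTransGen (fullOpenAdj d ω) v w}

/-- Connectivity in `B_d(n)` avoiding the edges of `B`. -/
def avoidConn (d n : ℕ) (B : Finset (EdgeZ d)) : Vert d → Vert d → Prop :=
  Relation.ReflTransGen fun a b => ∃ e ∈ boxEdgeFinset d n, e ∉ B ∧
    ((e.1 = a ∧ edgeSnd e = b) ∨ (e.1 = b ∧ edgeSnd e = a))

/-- `B` is a cutset of edges separating `v` from `w` in `B_d(n)`:
every path from `v` to `w` in `B_d(n)` uses an edge of `B`. -/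
def IsCutset (d n : ℕ) (v w : Vert d) (B : Finset (EdgeZ d)) : Prop :=
  B ⊆ boxEdgeFinset d n ∧ ¬ avoidConn d n B v w

/-- A minimal cutset separating `v` from `w`. -/
def IsMinimalCutset (d n : ℕ) (v w : Vert d) (B : Finset (EdgeZ d)) : Prop :=
  IsCutset d n v w B ∧ ∀ B' ⊂ B, ¬ IsCutset d n v w B'

/-- Adjacency of open sites of site percolation in the box. -/
def siteAdj (d n : ℕ) (η : Vert d → Bool) (a b : Vert d) : Prop :=
  a ∈ boxFinset d n ∧ b ∈ boxFinset d n ∧ η a = true ∧ η b = true ∧ latAdj a b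

/-- The open cluster of `v` for site percolation on `B_d(n)`. -/
def siteCluster (d n : ℕ) (η : Vert d → Bool) (v : Vert d) : Finset (Vert d) :=
  (boxFinset d n).filter fun w => Relation.ReflTransGen (siteAdj d n η) v w

/-- Number of lattice edges of the box with both endpoints in `C`. -/
def siteEdgeCount (d n : ℕ) (C : Finset (Vert d)) : ℕ :=
  ((boxEdgeFinset d n).filter fun e => e.1 ∈ C ∧ edgeSnd e ∈ C).card

def IsSiteCluster (d n : ℕ) (η : Vert d → Bool) (C : Finset (Vert d)) : Prop :=
  ∃ v ∈ boxFinset d n, η v = true ∧ C = siteCluster d n η v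

def IsLargestSiteCluster (d n : ℕ) (η : Vert d → Bool) (C : Finset (Vert d)) : Prop :=
  IsSiteCluster d n η C ∧
    ∀ C', IsSiteCluster d n η C' → siteEdgeCount d n C' ≤ siteEdgeCount d n C

/-- The primal edge of `ℤ²` crossing a given edge of the dual lattice `ℤ²_* = ℤ² + (1/2,1/2)`
(dual vertices are identified with `ℤ²` via `u ↦ u + (1/2,1/2)`). -/
def primalOfDual (f : EdgeZ 2) : EdgeZ 2 :=
  if f.2 = (0 : Fin 2) then (![f.1 0 + 1, f.1 1], 1) else (![f.1 0, f.1 1 + 1], 0)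

/-- First-passage weight of the dual edge between the dual vertices `a` and `b`:
`1` if the primal edge crossing it is open, `0` if it is closed. -/
def dualStepWeight (ω : EdgeZ 2 → Bool) (a b : Vert 2) : ℕ :=
  if (∃ i : Fin 2, b = a + unitVec 2 i ∧ ω (primalOfDual (a, i)) = true) ∨
     (∃ i : Fin 2, a = b + unitVec 2 i ∧ ω (primalOfDual (b, i)) = true) then 1 else 0

/-- Total first-passage cost of a dual lattice path, given as the list of its vertices. -/
def pathCost (ω : EdgeZ 2 → Bool) (l : List (Vert 2)) : ℕ :=
  ((l.zip l.tail).map fun q => dualStepWeight ω q.1 q.2).sum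

/-- `l` is a lattice path from `x` to `y`. -/
def IsLatticePath (l : List (Vert 2)) (x y : Vert 2) : Prop :=
  l.Chain' latAdj ∧ l.head? = some x ∧ l.getLast? = some y

/-- First-passage percolation distance on the dual lattice:
`D(x,y) = min { Σᵢ X(eᵢ*) : e₁*,…,e_k* a dual path from x to y }`. -/
def fppDist (ω : EdgeZ 2 → Bool) (x y : Vert 2) : ℕ :=
  sInf {m : ℕ | ∃ l : List (Vert 2), IsLatticePath l x y ∧ pathCost ω l = m}

end


section CheegerAux

open Finset

variable {V : Type*} [Fintype V] [DecidableEq V]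

namespace CheegerAux

/-- Sum of degrees over a set, as a real number. -/
noncomputable def sA (G : SimpleGraph V) (A : Finset V) : ℝ :=
  ∑ x ∈ A, (rDeg G.Adj Finset.univ x : ℝ)

/-- Number of (ordered) edges from `A` to `B`, as a real number. -/
noncomputable def eE (G : SimpleGraph V) (A B : Finset V) : ℝ :=
  ∑ a ∈ A, ∑ b ∈ B, (if G.Adj a b then (1 : ℝ) else 0)

lemma piSet_eq (G : SimpleGraph V) (A : Finset V) :
    piSet G.Adj Finset.univ A = sA G A / sA G Finset.univ := by
  simp [piSet, sA, rTotal]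

lemma qBetween_eq (G : SimpleGraph V) (A B : Finset V) :
    qBetween G.Adj Finset.univ A B = eE G A B / sA G Finset.univ := by
  have hc : ∀ a : V, ((B.filter fun b => G.Adj a b).card : ℝ) =
      ∑ b ∈ B, (if G.Adj a b then (1 : ℝ) else 0) := by
    intro a
    rw [Finset.card_filter]
    push_cast
    exact Finset.sum_congr rfl fun b _ => by split <;> simp
  rw [qBetween, eE]
  rw [show (∑ a ∈ A, ((B.filter fun b => G.Adj a b).card : ℝ)) =
    ∑ a ∈ A, ∑ b ∈ B, (if G.Adj a b then (1 : ℝ) else 0) from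
    Finset.sum_congr rfl fun a _ => hc a]
  congr 1
  simp [sA, rTotal]

lemma deg_pos (G : SimpleGraph V) [Nontrivial V] (hG : G.Connected) (x : V) :
    0 < rDeg G.Adj Finset.univ x := by
  obtain ⟨y, hy⟩ := exists_ne x
  obtain ⟨w⟩ := hG.preconnected x y
  rw [rDeg, Finset.card_pos]
  cases w with
  | nil => exact absurd rfl hy.symm
  | cons h p => exact ⟨_, Finset.mem_filter.2 ⟨Finset.mem_univ _, h⟩⟩

lemma sA_nonneg (G : SimpleGraph V) (A : Finset V) : 0 ≤ sA G A :=
  Finset.sum_nonneg fun _ _ => by positivity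

lemma sA_pos (G : SimpleGraph V) [Nontrivial V] (hG : G.Connected) {A : Finset V}
    (hA : A.Nonempty) : 0 < sA G A :=
  Finset.sum_pos (fun i _ => by exact_mod_cast deg_pos G hG i) hA

lemma nonempty_of_sA_pos (G : SimpleGraph V) {A : Finset V} (h : 0 < sA G A) :
    A.Nonempty := by
  by_contra hA
  rw [Finset.not_nonempty_iff_eq_empty] at hA
  simp [hA, sA] at h

lemma sA_mono (G : SimpleGraph V) {A B : Finset V} (h : A ⊆ B) : sA G A ≤ sA G B :=
  Finset.sum_le_sum_of_subset_of_nonneg h fun _ _ _ => by positivity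

lemma sA_union (G : SimpleGraph V) {A B : Finset V} (h : Disjoint A B) :
    sA G (A ∪ B) = sA G A + sA G B := by
  rw [sA, Finset.sum_union h]; rfl

lemma sA_compl_add (G : SimpleGraph V) (A : Finset V) :
    sA G A + sA G (Finset.univ \ A) = sA G Finset.univ := by
  rw [sA, sA, sA, add_comm]
  exact Finset.sum_sdiff (Finset.subset_univ A)

lemma eE_nonneg (G : SimpleGraph V) (A B : Finset V) : 0 ≤ eE G A B :=
  Finset.sum_nonneg fun _ _ => Finset.sum_nonneg fun _ _ => by positivity

lemma eE_symm (G : SimpleGraph V) (A B : Finset V) : eE G A B = eE G B A := by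
  rw [eE, Finset.sum_comm, eE]
  refine Finset.sum_congr rfl fun b _ => Finset.sum_congr rfl fun a _ => by
    rw [G.adj_comm]

lemma eE_union_right (G : SimpleGraph V) (A : Finset V) {B C : Finset V}
    (h : Disjoint B C) : eE G A (B ∪ C) = eE G A B + eE G A C := by
  rw [eE, eE, eE, ← Finset.sum_add_distrib]
  exact Finset.sum_congr rfl fun a _ => Finset.sum_union h

lemma eE_zero (G : SimpleGraph V) {A B : Finset V}
    (h : ∀ a ∈ A, ∀ b ∈ B, ¬ G.Adj a b) : eE G A B = 0 :=
  Finset.sum_eq_zero fun a ha => Finset.sum_eq_zero fun b hb => by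
    simp [h a ha b hb]

lemma condEq (G : SimpleGraph V) (A : Finset V) :
    conductance G.Adj Finset.univ A =
      sA G Finset.univ * eE G A (Finset.univ \ A) /
        (sA G A * sA G (Finset.univ \ A)) := by
  rw [conductance, qBetween_eq, piSet_eq, piSet_eq]
  set T := sA G Finset.univ
  set a := sA G A
  set b := sA G (Finset.univ \ A)
  set e := eE G A (Finset.univ \ A)
  rcases eq_or_ne T 0 with hT | hT
  · simp [hT]
  rcases eq_or_ne (a * b) 0 with hab | hab
  · have h1 : a / T * (b / T) = 0 := by
      rw [div_mul_div_comm, hab, zero_div]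
    rw [h1, hab, div_zero, div_zero]
  · field_simp

lemma cond_compl (G : SimpleGraph V) (A : Finset V) :
    conductance G.Adj Finset.univ (Finset.univ \ A) = conductance G.Adj Finset.univ A := by
  have h2 : Finset.univ \ (Finset.univ \ A) = A := by
    simp [Finset.sdiff_sdiff_self_left]
  rw [condEq, condEq, h2, eE_symm, mul_comm (sA G A)]

lemma cond_nonneg (G : SimpleGraph V) (A : Finset V) :
    0 ≤ conductance G.Adj Finset.univ A := by
  rw [condEq]
  have h1 := sA_nonneg G Finset.univ
  have h2 := eE_nonneg G A (Finset.univ \ A)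
  have h3 := sA_nonneg G A
  have h4 := sA_nonneg G (Finset.univ \ A)
  positivity

lemma pi_pos (G : SimpleGraph V) [Nontrivial V] (hG : G.Connected) {A : Finset V}
    (hA : A.Nonempty) : 0 < piSet G.Adj Finset.univ A := by
  rw [piSet_eq]
  exact div_pos (sA_pos G hG hA) (sA_pos G hG Finset.univ_nonempty)

lemma nonempty_of_pi_pos (G : SimpleGraph V) {A : Finset V}
    (h : 0 < piSet G.Adj Finset.univ A) : A.Nonempty := by
  rw [piSet_eq] at h
  rcases Finset.eq_empty_or_nonempty A with rfl | hA
  · simp [sA] at h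
  · exact hA

lemma pi_mono (G : SimpleGraph V) [Nontrivial V] (hG : G.Connected) {A B : Finset V}
    (h : A ⊆ B) : piSet G.Adj Finset.univ A ≤ piSet G.Adj Finset.univ B := by
  rw [piSet_eq, piSet_eq]
  have hT : 0 < sA G Finset.univ := sA_pos G hG Finset.univ_nonempty
  gcongr
  exact sA_mono G h

lemma pi_compl (G : SimpleGraph V) [Nontrivial V] (hG : G.Connected) (A : Finset V) :
    piSet G.Adj Finset.univ (Finset.univ \ A) = 1 - piSet G.Adj Finset.univ A := by
  have hT : 0 < sA G Finset.univ := sA_pos G hG Finset.univ_nonempty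
  have hs := sA_compl_add G A
  rw [piSet_eq, piSet_eq]
  field_simp
  linarith

lemma compl_nonempty (G : SimpleGraph V) [Nontrivial V] (hG : G.Connected) {A : Finset V}
    (h : piSet G.Adj Finset.univ A ≤ 1 / 2) : (Finset.univ \ A).Nonempty := by
  have hT : 0 < sA G Finset.univ := sA_pos G hG Finset.univ_nonempty
  have hs := sA_compl_add G A
  rw [piSet_eq, div_le_iff₀ hT] at h
  apply nonempty_of_sA_pos G (A := Finset.univ \ A)
  nlinarith

lemma compl_union {A D₁ D₂ : Finset V} (hu : Finset.univ \ A = D₁ ∪ D₂)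
    (hd : Disjoint D₁ D₂) : Finset.univ \ (A ∪ D₂) = D₁ := by
  ext z
  have h1 := Finset.ext_iff.1 hu z
  have h2 : z ∈ D₁ → z ∉ D₂ := fun hz1 hz2 => Finset.disjoint_left.1 hd hz1 hz2
  simp only [Finset.mem_sdiff, Finset.mem_univ, true_and, Finset.mem_union] at h1 ⊢
  tauto

/-- The key splitting inequality: if the complement of `A` splits into two nonempty parts
with no edges between them, one of the parts has conductance at most that of `A`. -/
lemma split (G : SimpleGraph V) [Nontrivial V] (hG : G.Connected) (A D₁ D₂ : Finset V)
    (hA : A.Nonempty) (h1 : D₁.Nonempty) (h2 : D₂.Nonempty) (hd : Disjoint D₁ D₂)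
    (hu : Finset.univ \ A = D₁ ∪ D₂) (hna : ∀ a ∈ D₁, ∀ b ∈ D₂, ¬ G.Adj a b) :
    conductance G.Adj Finset.univ D₁ ≤ conductance G.Adj Finset.univ A ∨
      conductance G.Adj Finset.univ D₂ ≤ conductance G.Adj Finset.univ A := by
  have hdA1 : Disjoint A D₁ := by
    rw [Finset.disjoint_left]
    intro z hz hz1
    have : z ∈ Finset.univ \ A := hu ▸ Finset.mem_union_left _ hz1
    exact (Finset.mem_sdiff.1 this).2 hz
  have hdA2 : Disjoint A D₂ := by
    rw [Finset.disjoint_left]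
    intro z hz hz2
    have : z ∈ Finset.univ \ A := hu ▸ Finset.mem_union_right _ hz2
    exact (Finset.mem_sdiff.1 this).2 hz
  have hc1 : Finset.univ \ D₁ = A ∪ D₂ := by
    ext z
    have h1' := Finset.ext_iff.1 hu z
    have h2' : z ∈ D₁ → z ∉ D₂ := fun p q => Finset.disjoint_left.1 hd p q
    have h3' : z ∈ A → z ∉ D₁ := fun p q => Finset.disjoint_left.1 hdA1 p q
    have h4' : z ∈ A → z ∉ D₂ := fun p q => Finset.disjoint_left.1 hdA2 p q
    simp only [Finset.mem_sdiff, Finset.mem_univ, true_and, Finset.mem_union] at h1' ⊢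
    tauto
  have hc2 : Finset.univ \ D₂ = A ∪ D₁ := by
    ext z
    have h1' := Finset.ext_iff.1 hu z
    have h2' : z ∈ D₁ → z ∉ D₂ := fun p q => Finset.disjoint_left.1 hd p q
    have h3' : z ∈ A → z ∉ D₁ := fun p q => Finset.disjoint_left.1 hdA1 p q
    have h4' : z ∈ A → z ∉ D₂ := fun p q => Finset.disjoint_left.1 hdA2 p q
    simp only [Finset.mem_sdiff, Finset.mem_univ, true_and, Finset.mem_union] at h1' ⊢
    tauto
  set T := sA G Finset.univ with hTdef
  set a := sA G A with hadef
  set d1 := sA G D₁ with hd1def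
  set d2 := sA G D₂ with hd2def
  set e1 := eE G A D₁ with he1def
  set e2 := eE G A D₂ with he2def
  have hT : 0 < T := sA_pos G hG Finset.univ_nonempty
  have ha : 0 < a := sA_pos G hG hA
  have hd1 : 0 < d1 := sA_pos G hG h1
  have hd2 : 0 < d2 := sA_pos G hG h2
  have he1 : 0 ≤ e1 := eE_nonneg G A D₁
  have he2 : 0 ≤ e2 := eE_nonneg G A D₂
  have hcA : conductance G.Adj Finset.univ A = T * (e1 + e2) / (a * (d1 + d2)) := by
    rw [condEq, hu, eE_union_right G A hd, sA_union G hd]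
  have hcD1 : conductance G.Adj Finset.univ D₁ = T * e1 / (d1 * (a + d2)) := by
    rw [condEq, hc1, eE_union_right G D₁ hdA2, sA_union G hdA2, eE_symm G D₁ A,
      eE_zero G hna, add_zero]
  have hcD2 : conductance G.Adj Finset.univ D₂ = T * e2 / (d2 * (a + d1)) := by
    have hna' : ∀ a ∈ D₂, ∀ b ∈ D₁, ¬ G.Adj a b := fun p hp q hq h =>
      hna q hq p hp (G.adj_symm h)
    rw [condEq, hc2, eE_union_right G D₂ hdA1, sA_union G hdA1, eE_symm G D₂ A,
      eE_zero G hna', add_zero]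
  rw [hcA, hcD1, hcD2]
  by_contra hcon
  push_neg at hcon
  obtain ⟨l1, l2⟩ := hcon
  set p := T * (e1 + e2) / (a * (d1 + d2)) with hpdef
  have hp0 : 0 ≤ p := by positivity
  have hpe : p * (a * (d1 + d2)) = T * (e1 + e2) :=
    div_mul_cancel₀ _ (by positivity)
  have k1 : p * (d1 * (a + d2)) < T * e1 := (lt_div_iff₀ (by positivity)).mp l1
  have k2 : p * (d2 * (a + d1)) < T * e2 := (lt_div_iff₀ (by positivity)).mp l2
  nlinarith [mul_nonneg (mul_nonneg hp0 hd1.le) hd2.le]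

lemma rtg_symm {r : V → V → Prop} (h : Symmetric r) :
    Symmetric (Relation.ReflTransGen r) := by
  intro p q hpq
  induction hpq with
  | refl => exact Relation.ReflTransGen.refl
  | tail _ hstep ih => exact Relation.ReflTransGen.head (h hstep) ih

/-- A disconnected nonempty set splits into a connected component and the (nonempty) rest,
with no edges between. -/
lemma comp_split (G : SimpleGraph V) (S : Finset V) (hS : S.Nonempty)
    (h : ¬ ConnectedOn G.Adj S) :
    ∃ D₁ D₂ : Finset V, D₁.Nonempty ∧ D₂.Nonempty ∧ Disjoint D₁ D₂ ∧ D₁ ∪ D₂ = S ∧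
      ConnectedOn G.Adj D₁ ∧ ∀ a ∈ D₁, ∀ b ∈ D₂, ¬ G.Adj a b := by
  classical
  have h' : ¬ ∀ v ∈ S, ∀ w ∈ S,
      Relation.ReflTransGen (fun a b => a ∈ S ∧ b ∈ S ∧ G.Adj a b) v w :=
    fun hq => h ⟨hS, hq⟩
  push_neg at h'
  obtain ⟨v, hv, w, hw, hvw⟩ := h'
  set rel := fun a b => a ∈ S ∧ b ∈ S ∧ G.Adj a b with hreldef
  set D₁ := S.filter (fun u => Relation.ReflTransGen rel v u) with hD₁def
  have aux : ∀ u, Relation.ReflTransGen rel v u →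
      u ∈ D₁ ∧ Relation.ReflTransGen (fun a b => a ∈ D₁ ∧ b ∈ D₁ ∧ G.Adj a b) v u := by
    intro u hu
    induction hu with
    | refl => exact ⟨Finset.mem_filter.2 ⟨hv, Relation.ReflTransGen.refl⟩,
        Relation.ReflTransGen.refl⟩
    | @tail b c hvb hstep ih =>
      obtain ⟨hbS, hcS, hadj⟩ := hstep
      have hc : c ∈ D₁ := Finset.mem_filter.2 ⟨hcS, hvb.tail ⟨hbS, hcS, hadj⟩⟩
      exact ⟨hc, ih.2.tail ⟨ih.1, hc, hadj⟩⟩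
  have hvD : v ∈ D₁ := (aux v Relation.ReflTransGen.refl).1
  have hwD : w ∉ D₁ := fun hwD => hvw (Finset.mem_filter.1 hwD).2
  refine ⟨D₁, S \ D₁, ⟨v, hvD⟩, ⟨w, Finset.mem_sdiff.2 ⟨hw, hwD⟩⟩,
    Finset.disjoint_sdiff, Finset.union_sdiff_of_subset (Finset.filter_subset _ _),
    ⟨⟨v, hvD⟩, ?_⟩, ?_⟩
  · intro p hp q hq
    have hsymm : Symmetric (fun a b => a ∈ D₁ ∧ b ∈ D₁ ∧ G.Adj a b) :=
      fun a b ⟨x, y, z⟩ => ⟨y, x, G.adj_symm z⟩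
    exact (rtg_symm hsymm (aux p (Finset.mem_filter.1 hp).2).2).trans
      (aux q (Finset.mem_filter.1 hq).2).2
  · intro a ha b hb hadj
    have haS : a ∈ S := Finset.filter_subset _ _ ha
    have hbmem := Finset.mem_sdiff.1 hb
    have : b ∈ D₁ := Finset.mem_filter.2
      ⟨hbmem.1, (Finset.mem_filter.1 ha).2.tail ⟨haS, hbmem.1, hadj⟩⟩
    exact hbmem.2 this

/-- If `A` is connected and `univ \ A` splits as `D₁ ∪ D₂` with no edges between the parts,
then `A ∪ D₂` is connected. -/
lemma union_conn (G : SimpleGraph V) (hG : G.Connected) (A D₁ D₂ : Finset V)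
    (hA : ConnectedOn G.Adj A) (hu : Finset.univ \ A = D₁ ∪ D₂)
    (hna : ∀ a ∈ D₁, ∀ b ∈ D₂, ¬ G.Adj a b) :
    ConnectedOn G.Adj (A ∪ D₂) := by
  obtain ⟨⟨a₀, ha₀⟩, hconnA⟩ := hA
  set rel := fun p q => p ∈ A ∪ D₂ ∧ q ∈ A ∪ D₂ ∧ G.Adj p q with hreldef
  have hArel : ∀ u ∈ A, Relation.ReflTransGen rel u a₀ := by
    intro u hu'
    exact Relation.ReflTransGen.mono (r := fun a b => a ∈ A ∧ b ∈ A ∧ G.Adj a b) (p := rel)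
      (fun p q ⟨hp, hq, h⟩ =>
      ⟨Finset.mem_union_left _ hp, Finset.mem_union_left _ hq, h⟩) _ _ (hconnA u hu' a₀ ha₀)
  have key : ∀ u ∈ A ∪ D₂, Relation.ReflTransGen rel u a₀ := by
    intro u hu'
    have hreach : Relation.ReflTransGen G.Adj u a₀ :=
      (SimpleGraph.reachable_iff_reflTransGen _ _).mp (hG.preconnected u a₀)
    revert hu'
    induction hreach using Relation.ReflTransGen.head_induction_on with
    | refl => intro _; exact Relation.ReflTransGen.refl
    | head hadj ht ih =>
      rename_i u' c
      intro hu'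
      rcases Finset.mem_union.1 hu' with hA' | hD2
      · exact hArel _ hA'
      · have hc : c ∈ A ∪ D₂ := by
          by_contra hcn
          have hcs : c ∈ Finset.univ \ A := Finset.mem_sdiff.2
            ⟨Finset.mem_univ _, fun h => hcn (Finset.mem_union_left _ h)⟩
          rw [hu] at hcs
          rcases Finset.mem_union.1 hcs with hx1 | hx2
          · exact hna c hx1 _ hD2 (G.adj_symm hadj)
          · exact hcn (Finset.mem_union_right _ hx2)
        exact (ih hc).head ⟨hu', hc, hadj⟩
  have hsymm : Symmetric rel := fun a b ⟨x, y, z⟩ => ⟨y, x, G.adj_symm z⟩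
  exact ⟨⟨a₀, Finset.mem_union_left _ ha₀⟩, fun p hp q hq =>
    (key p hp).trans (rtg_symm hsymm (key q hq))⟩

/-- Part 1: the size-restricted minimum is attained at a connected set. -/
lemma part1 (G : SimpleGraph V) [Nontrivial V] (hG : G.Connected) (x : ℝ)
    (hx2 : x ≤ 1 / 2)
    (hne : ∃ A : Finset V, 0 < piSet G.Adj Finset.univ A ∧ piSet G.Adj Finset.univ A ≤ x) :
    ∃ A : Finset V, 0 < piSet G.Adj Finset.univ A ∧ piSet G.Adj Finset.univ A ≤ x ∧
      ConnectedOn G.Adj A ∧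
      ∀ B : Finset V, 0 < piSet G.Adj Finset.univ B → piSet G.Adj Finset.univ B ≤ x →
        conductance G.Adj Finset.univ A ≤ conductance G.Adj Finset.univ B := by
  classical
  set cand : Finset (Finset V) := Finset.univ.filter
    (fun A => 0 < piSet G.Adj Finset.univ A ∧ piSet G.Adj Finset.univ A ≤ x) with hcand
  have hcne : cand.Nonempty := by
    obtain ⟨A, h1, h2⟩ := hne
    exact ⟨A, Finset.mem_filter.2 ⟨Finset.mem_univ _, h1, h2⟩⟩
  obtain ⟨A₀, hA₀c, hA₀min⟩ := Finset.exists_min_image cand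
    (conductance G.Adj Finset.univ) hcne
  set M : Finset (Finset V) := cand.filter
    (fun A => conductance G.Adj Finset.univ A ≤ conductance G.Adj Finset.univ A₀) with hM
  have hMne : M.Nonempty := ⟨A₀, Finset.mem_filter.2 ⟨hA₀c, le_refl _⟩⟩
  obtain ⟨A₁, hA₁M, hA₁min⟩ := Finset.exists_min_image M Finset.card hMne
  have hA₁cand := (Finset.mem_filter.1 hA₁M).1
  obtain ⟨-, hpos, hle⟩ := Finset.mem_filter.1 hA₁cand
  have hφ : conductance G.Adj Finset.univ A₁ ≤ conductance G.Adj Finset.univ A₀ :=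
    (Finset.mem_filter.1 hA₁M).2
  have hmin : ∀ B : Finset V, 0 < piSet G.Adj Finset.univ B →
      piSet G.Adj Finset.univ B ≤ x →
      conductance G.Adj Finset.univ A₁ ≤ conductance G.Adj Finset.univ B := by
    intro B h1 h2
    exact le_trans hφ (hA₀min B (Finset.mem_filter.2 ⟨Finset.mem_univ _, h1, h2⟩))
  refine ⟨A₁, hpos, hle, ?_, hmin⟩
  by_contra hnc
  have hA₁ne : A₁.Nonempty := nonempty_of_pi_pos G hpos
  obtain ⟨D₁, D₂, hD1, hD2, hd, huu, -, hna⟩ := comp_split G A₁ hA₁ne hnc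
  have hAc : (Finset.univ \ A₁).Nonempty := compl_nonempty G hG (le_trans hle hx2)
  have hsd : Finset.univ \ (Finset.univ \ A₁) = D₁ ∪ D₂ := by
    rw [Finset.sdiff_sdiff_self_left, Finset.univ_inter, huu]
  have hsplit := split G hG (Finset.univ \ A₁) D₁ D₂ hAc hD1 hD2 hd hsd hna
  rw [cond_compl] at hsplit
  have finish : ∀ D : Finset V, D.Nonempty → D ⊂ A₁ →
      conductance G.Adj Finset.univ D ≤ conductance G.Adj Finset.univ A₁ → False := by
    intro D hDne hDsub hDle
    have hDc : D ∈ M := by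
      refine Finset.mem_filter.2 ⟨Finset.mem_filter.2 ⟨Finset.mem_univ _,
        pi_pos G hG hDne, le_trans (pi_mono G hG hDsub.subset) hle⟩, le_trans hDle hφ⟩
    have := hA₁min D hDc
    have := Finset.card_lt_card hDsub
    omega
  have hsub1 : D₁ ⊆ A₁ := huu ▸ Finset.subset_union_left
  have hsub2 : D₂ ⊆ A₁ := huu ▸ Finset.subset_union_right
  rcases hsplit with hcase | hcase
  · refine finish D₁ hD1 ⟨hsub1, fun hsup => ?_⟩ hcase
    obtain ⟨z, hz⟩ := hD2
    exact Finset.disjoint_left.1 hd (hsup (hsub2 hz)) hz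
  · refine finish D₂ hD2 ⟨hsub2, fun hsup => ?_⟩ hcase
    obtain ⟨z, hz⟩ := hD1
    exact Finset.disjoint_left.1 hd hz (hsup (hsub1 hz))

/-- Part 2 induction: from a connected set achieving the minimum, produce one whose
complement is also connected. -/
lemma part2aux (G : SimpleGraph V) [Nontrivial V] (hG : G.Connected) :
    ∀ n : ℕ, ∀ A : Finset V, ConnectedOn G.Adj A → (Finset.univ \ A).Nonempty →
      (∀ B : Finset V, 0 < piSet G.Adj Finset.univ B → piSet G.Adj Finset.univ B ≤ 1 / 2 →
        conductance G.Adj Finset.univ A ≤ conductance G.Adj Finset.univ B) →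
      (Finset.univ \ A).card ≤ n →
      ∃ C : Finset V, 0 < piSet G.Adj Finset.univ C ∧ piSet G.Adj Finset.univ C ≤ 1 / 2 ∧
        ConnectedOn G.Adj C ∧ ConnectedOn G.Adj (Finset.univ \ C) ∧
        ∀ B : Finset V, 0 < piSet G.Adj Finset.univ B → piSet G.Adj Finset.univ B ≤ 1 / 2 →
          conductance G.Adj Finset.univ C ≤ conductance G.Adj Finset.univ B := by
  intro n
  induction n with
  | zero =>
    intro A _ hne _ hcard
    rw [Nat.le_zero, Finset.card_eq_zero] at hcard
    exact absurd hcard (Finset.nonempty_iff_ne_empty.1 hne)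
  | succ n ih =>
    intro A hconnA hDne hmin hcard
    by_cases hDc : ConnectedOn G.Adj (Finset.univ \ A)
    · by_cases hp : piSet G.Adj Finset.univ A ≤ 1 / 2
      · exact ⟨A, pi_pos G hG hconnA.1, hp, hconnA, hDc, hmin⟩
      · push_neg at hp
        have hAA : Finset.univ \ (Finset.univ \ A) = A := by
          simp [Finset.sdiff_sdiff_self_left]
        refine ⟨Finset.univ \ A, pi_pos G hG hDne, ?_, hDc, ?_, ?_⟩
        · rw [pi_compl G hG]; linarith
        · rw [hAA]; exact hconnA
        · intro B h1 h2; rw [cond_compl]; exact hmin B h1 h2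
    · obtain ⟨D₁, D₂, h1, h2, hd, huu, -, hna⟩ := comp_split G (Finset.univ \ A) hDne hDc
      have hAne := hconnA.1
      have hsplit := split G hG A D₁ D₂ hAne h1 h2 hd huu.symm hna
      have hcards : (Finset.univ \ A).card = D₁.card + D₂.card := by
        rw [← huu, Finset.card_union_of_disjoint hd]
      have hna' : ∀ a ∈ D₂, ∀ b ∈ D₁, ¬ G.Adj a b := fun p hp q hq h =>
        hna q hq p hp (G.adj_symm h)
      rcases hsplit with hcase | hcase
      · -- use A' = A ∪ D₂, complement D₁
        have hA' : ConnectedOn G.Adj (A ∪ D₂) := union_conn G hG A D₁ D₂ hconnA huu.symm hna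
        have hcompl : Finset.univ \ (A ∪ D₂) = D₁ := compl_union huu.symm hd
        have hφeq : conductance G.Adj Finset.univ (A ∪ D₂) =
            conductance G.Adj Finset.univ D₁ := by
          conv_lhs => rw [← cond_compl G (A ∪ D₂), hcompl]
        have hmin' : ∀ B : Finset V, 0 < piSet G.Adj Finset.univ B →
            piSet G.Adj Finset.univ B ≤ 1 / 2 →
            conductance G.Adj Finset.univ (A ∪ D₂) ≤ conductance G.Adj Finset.univ B := by
          intro B hb1 hb2
          rw [hφeq]
          exact le_trans hcase (hmin B hb1 hb2)
        refine ih (A ∪ D₂) hA' (hcompl ▸ h1) hmin' ?_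
        rw [hcompl]
        have := Finset.Nonempty.card_pos h2
        omega
      · -- use A' = A ∪ D₁, complement D₂
        have huu2 : Finset.univ \ A = D₂ ∪ D₁ := by rw [huu.symm, Finset.union_comm]
        have hA' : ConnectedOn G.Adj (A ∪ D₁) := union_conn G hG A D₂ D₁ hconnA huu2 hna'
        have hcompl : Finset.univ \ (A ∪ D₁) = D₂ := compl_union huu2 hd.symm
        have hφeq : conductance G.Adj Finset.univ (A ∪ D₁) =
            conductance G.Adj Finset.univ D₂ := by
          conv_lhs => rw [← cond_compl G (A ∪ D₁), hcompl]
        have hmin' : ∀ B : Finset V, 0 < piSet G.Adj Finset.univ B →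
            piSet G.Adj Finset.univ B ≤ 1 / 2 →
            conductance G.Adj Finset.univ (A ∪ D₁) ≤ conductance G.Adj Finset.univ B := by
          intro B hb1 hb2
          rw [hφeq]
          exact le_trans hcase (hmin B hb1 hb2)
        refine ih (A ∪ D₁) hA' (hcompl ▸ h2) hmin' ?_
        rw [hcompl]
        have := Finset.Nonempty.card_pos h1
        omega

end CheegerAux

end CheegerAux

/-- In a finite connected graph the minimum in the definition of `φ(x)` is
attained at a connected set, and the minimum in the definition of the Cheeger constant `φ`
is attained at a set `A` with both `A` and `Aᶜ` connected. -/
theorem cheeger_min_attained_connected {V : Type*} [Fintype V] [DecidableEq V] [Nontrivial V]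
    (G : SimpleGraph V) [DecidableRel G.Adj] (hG : G.Connected) (x : ℝ) (hx : 0 < x)
    (hx2 : x ≤ 1 / 2)
    (hne : ∃ A : Finset V, 0 < piSet G.Adj Finset.univ A ∧ piSet G.Adj Finset.univ A ≤ x) :
    (∃ A : Finset V, 0 < piSet G.Adj Finset.univ A ∧ piSet G.Adj Finset.univ A ≤ x ∧
        ConnectedOn G.Adj A ∧
        ∀ B : Finset V, 0 < piSet G.Adj Finset.univ B → piSet G.Adj Finset.univ B ≤ x →
          conductance G.Adj Finset.univ A ≤ conductance G.Adj Finset.univ B) ∧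
      (∃ A : Finset V, 0 < piSet G.Adj Finset.univ A ∧ piSet G.Adj Finset.univ A ≤ 1 / 2 ∧
        ConnectedOn G.Adj A ∧ ConnectedOn G.Adj (Finset.univ \ A) ∧
        ∀ B : Finset V, 0 < piSet G.Adj Finset.univ B → piSet G.Adj Finset.univ B ≤ 1 / 2 →
          conductance G.Adj Finset.univ A ≤ conductance G.Adj Finset.univ B) := by
  constructor
  · exact CheegerAux.part1 G hG x hx2 hne
  · have hne2 : ∃ A : Finset V, 0 < piSet G.Adj Finset.univ A ∧
        piSet G.Adj Finset.univ A ≤ 1 / 2 := by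
      obtain ⟨A, h1, h2⟩ := hne
      exact ⟨A, h1, le_trans h2 hx2⟩
    obtain ⟨A, hp, hle, hconn, hmin⟩ := CheegerAux.part1 G hG (1 / 2) le_rfl hne2
    exact CheegerAux.part2aux G hG (Finset.univ \ A).card A hconn
      (CheegerAux.compl_nonempty G hG hle) hmin le_rfl
end

section
/- For every d ≥ 2 and every pair of vertices v, w of B_d(n), the number of minimal cutsets of edges of size m separating v from w in B_d(n) is at most c(d)^m for some constant c(d) depending only on d. -/
open MeasureTheory Filter
open scoped ENNReal Classical

open scoped symmDiff

namespace CC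
noncomputable section
open Finset

variable {d n : ℕ}

lemma unitVec_self (d : ℕ) (i : Fin d) : unitVec d i i = 1 := if_pos rfl
lemma unitVec_ne (d : ℕ) {i j : Fin d} (h : j ≠ i) : unitVec d i j = 0 := if_neg h

lemma edgeSnd_eq (e : EdgeZ d) : edgeSnd e = e.1 + unitVec d e.2 := rfl

lemma edgeSnd_apply_self (e : EdgeZ d) : edgeSnd e e.2 = e.1 e.2 + 1 := by
  simp [edgeSnd, Pi.add_apply, unitVec_self]

lemma edgeSnd_apply_ne (e : EdgeZ d) {j : Fin d} (h : j ≠ e.2) : edgeSnd e j = e.1 j := by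
  simp [edgeSnd, Pi.add_apply, unitVec_ne _ h]

lemma edgeSnd_ne_base (e : EdgeZ d) : edgeSnd e ≠ e.1 := by
  intro h
  have := congrFun h e.2
  rw [edgeSnd_apply_self] at this
  omega

lemma mem_boxFinset {x : Vert d} : x ∈ boxFinset d n ↔ ∀ i, -(n:ℤ) ≤ x i ∧ x i ≤ n := by
  simp [boxFinset, Fintype.mem_piFinset, Finset.mem_Icc]

lemma mem_boxEdgeFinset {e : EdgeZ d} :
    e ∈ boxEdgeFinset d n ↔ e.1 ∈ boxFinset d n ∧ edgeSnd e ∈ boxFinset d n := by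
  simp [boxEdgeFinset, Finset.mem_filter, Finset.mem_product]

/-- The elementary step relation underlying `avoidConn`. -/
def stepR (d n : ℕ) (B : Finset (EdgeZ d)) (a b : Vert d) : Prop :=
  ∃ e ∈ boxEdgeFinset d n, e ∉ B ∧
    ((e.1 = a ∧ edgeSnd e = b) ∨ (e.1 = b ∧ edgeSnd e = a))

lemma avoidConn_eq (d n : ℕ) (B : Finset (EdgeZ d)) :
    avoidConn d n B = Relation.ReflTransGen (stepR d n B) := rfl

lemma stepR_symm {B : Finset (EdgeZ d)} {a b : Vert d} (h : stepR d n B a b) : stepR d n B b a := by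
  obtain ⟨e, he, heB, h⟩ := h
  exact ⟨e, he, heB, h.symm⟩

lemma avoid_symm {B : Finset (EdgeZ d)} {a b : Vert d}
    (h : Relation.ReflTransGen (stepR d n B) a b) : Relation.ReflTransGen (stepR d n B) b a := by
  induction h with
  | refl => exact .refl
  | tail _ hst ih => exact Relation.ReflTransGen.trans (.single (stepR_symm hst)) ih

lemma stepR_of_edge {B : Finset (EdgeZ d)} {e : EdgeZ d}
    (he : e ∈ boxEdgeFinset d n) (heB : e ∉ B) : stepR d n B e.1 (edgeSnd e) :=
  ⟨e, he, heB, Or.inl ⟨rfl, rfl⟩⟩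


/-! ### Parity of incidence counts -/

/-- Indicator in `ZMod 2`. -/
def indZ (P : Prop) : ZMod 2 := if P then 1 else 0

/-- Parity of the number of edges of `E` incident to `x`. -/
def incPar (E : Finset (EdgeZ d)) (x : Vert d) : ZMod 2 :=
  ((E.filter fun g => g.1 = x ∨ edgeSnd g = x).card : ZMod 2)

lemma card_symmDiff_par {α : Type*} [DecidableEq α] (A B : Finset α) :
    ((A ∆ B).card : ZMod 2) = (A.card : ZMod 2) + (B.card : ZMod 2) := by
  have h1 : (A ∪ B).card + (A ∩ B).card = A.card + B.card := Finset.card_union_add_card_inter A B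
  have h2 : (A ∆ B) = (A ∪ B) \ (A ∩ B) := by
    ext a; simp [Finset.mem_symmDiff, Finset.mem_sdiff, Finset.mem_union, Finset.mem_inter]; tauto
  have h3 : (A ∩ B) ⊆ (A ∪ B) := (Finset.inter_subset_left).trans Finset.subset_union_left
  have h4 : (A ∆ B).card + (A ∩ B).card = (A ∪ B).card := by
    rw [h2]; exact Finset.card_sdiff_add_card_eq_card h3
  have h5 : (A ∆ B).card + (A ∩ B).card + (A ∩ B).card = A.card + B.card := by omega
  have := congrArg (fun k : ℕ => (k : ZMod 2)) h5
  push_cast at this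
  have hz : ((A ∩ B).card : ZMod 2) + ((A ∩ B).card : ZMod 2) = 0 :=
    CharTwo.add_self_eq_zero _
  linear_combination this - hz

lemma filter_symmDiff' {α : Type*} [DecidableEq α] (p : α → Prop) [DecidablePred p]
    (A B : Finset α) : (A ∆ B).filter p = (A.filter p) ∆ (B.filter p) := by
  ext a; simp [Finset.mem_symmDiff, Finset.mem_filter]; tauto

lemma incPar_symmDiff (A B : Finset (EdgeZ d)) (x : Vert d) :
    incPar (A ∆ B) x = incPar A x + incPar B x := by
  unfold incPar
  rw [filter_symmDiff', card_symmDiff_par]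

lemma incPar_singleton (g : EdgeZ d) (x : Vert d) :
    incPar {g} x = indZ (x = g.1) + indZ (x = edgeSnd g) := by
  unfold incPar indZ
  rw [Finset.filter_singleton]
  have hne := edgeSnd_ne_base g
  by_cases h1 : x = g.1 <;> by_cases h2 : x = edgeSnd g <;>
    simp_all [eq_comm] <;> simp_all

lemma incPar_empty (x : Vert d) : incPar (∅ : Finset (EdgeZ d)) x = 0 := by
  simp [incPar]

/-- Edge set of a walk: parity of incidences is concentrated at the endpoints. -/
lemma walk_parity {B : Finset (EdgeZ d)} {a b : Vert d}
    (h : Relation.ReflTransGen (stepR d n B) a b) :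
    ∃ E : Finset (EdgeZ d), (∀ g ∈ E, g ∈ boxEdgeFinset d n ∧ g ∉ B) ∧
      ∀ x, incPar E x = indZ (x = a) + indZ (x = b) := by
  induction h with
  | refl =>
    exact ⟨∅, by simp, fun x => by rw [incPar_empty]; simp [CharTwo.add_self_eq_zero]⟩
  | @tail b c _ hst ih =>
    obtain ⟨E, hEsub, hEpar⟩ := ih
    obtain ⟨g, hg, hgB, hor⟩ := hst
    refine ⟨E ∆ {g}, ?_, ?_⟩
    · intro g' hg'
      rcases Finset.mem_symmDiff.mp hg' with ⟨h1, _⟩ | ⟨h1, _⟩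
      · exact hEsub g' h1
      · simp only [Finset.mem_singleton] at h1; subst h1; exact ⟨hg, hgB⟩
    · intro x
      rw [incPar_symmDiff, hEpar, incPar_singleton]
      have hends : indZ (x = g.1) + indZ (x = edgeSnd g) = indZ (x = b) + indZ (x = c) := by
        rcases hor with ⟨h1, h2⟩ | ⟨h1, h2⟩ <;> subst h1 <;> subst h2 <;> ring
      rw [hends]
      have : indZ (x = b) + indZ (x = b) = 0 := CharTwo.add_self_eq_zero _
      linear_combination this

lemma indZ_true {P : Prop} (h : P) : indZ P = 1 := if_pos h
lemma indZ_false {P : Prop} (h : ¬ P) : indZ P = 0 := if_neg h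

/-! ### Structure of minimal cutsets -/

section structure_facts

variable {v w : Vert d} {B : Finset (EdgeZ d)}

/-- Crossing lemma: a connection avoiding `B.erase e` either avoids `B`, or visits both
endpoints of `e` in a controlled way. -/
lemma cross_lemma {e : EdgeZ d} {a b : Vert d}
    (h : Relation.ReflTransGen (stepR d n (B.erase e)) a b) :
    Relation.ReflTransGen (stepR d n B) a b ∨
      ((Relation.ReflTransGen (stepR d n B) a e.1 ∨
        Relation.ReflTransGen (stepR d n B) a (edgeSnd e)) ∧
       (Relation.ReflTransGen (stepR d n B) e.1 b ∨
        Relation.ReflTransGen (stepR d n B) (edgeSnd e) b)) := by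
  induction h with
  | refl => exact Or.inl .refl
  | @tail y c _ hst ih =>
    obtain ⟨g, hg, hgB, hor⟩ := hst
    by_cases hgB' : g ∈ B
    · -- then g = e
      have hge : g = e := by
        by_contra hne
        exact hgB (Finset.mem_erase.mpr ⟨hne, hgB'⟩)
      subst hge
      -- endpoints of g are {y, c}
      rcases ih with hab | ⟨h1, h2⟩
      · refine Or.inr ⟨?_, ?_⟩
        · rcases hor with ⟨h1, _⟩ | ⟨_, h2⟩
          · exact Or.inl (h1 ▸ hab)
          · exact Or.inr (h2 ▸ hab)
        · rcases hor with ⟨_, h2⟩ | ⟨h1, _⟩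
          · exact Or.inr (h2 ▸ Relation.ReflTransGen.refl)
          · exact Or.inl (h1 ▸ Relation.ReflTransGen.refl)
      · refine Or.inr ⟨h1, ?_⟩
        rcases hor with ⟨_, h2'⟩ | ⟨h1', _⟩
        · exact Or.inr (h2' ▸ Relation.ReflTransGen.refl)
        · exact Or.inl (h1' ▸ Relation.ReflTransGen.refl)
    · -- step avoids B
      have hstep : stepR d n B y c := ⟨g, hg, hgB', hor⟩
      rcases ih with hab | ⟨h1, h2⟩
      · exact Or.inl (hab.tail hstep)
      · exact Or.inr ⟨h1, h2.imp (fun hh => hh.tail hstep) (fun hh => hh.tail hstep)⟩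

variable (hmin : IsMinimalCutset d n v w B)
include hmin

lemma not_reach_vw : ¬ Relation.ReflTransGen (stepR d n B) v w := hmin.1.2

lemma not_both_sides {x : Vert d} (h1 : Relation.ReflTransGen (stepR d n B) v x)
    (h2 : Relation.ReflTransGen (stepR d n B) x w) : False :=
  hmin.1.2 (h1.trans h2)

/-- Each edge of a minimal cutset has one endpoint connected (avoiding `B`) to `v` and
the other connected to `w`. -/
lemma boundary_split {e : EdgeZ d} (he : e ∈ B) :
    (Relation.ReflTransGen (stepR d n B) v e.1 ∧
     Relation.ReflTransGen (stepR d n B) (edgeSnd e) w) ∨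
    (Relation.ReflTransGen (stepR d n B) v (edgeSnd e) ∧
     Relation.ReflTransGen (stepR d n B) e.1 w) := by
  have hsub : B.erase e ⊂ B := Finset.erase_ssubset he
  have hnc := hmin.2 _ hsub
  have hsub' : B.erase e ⊆ boxEdgeFinset d n := (Finset.erase_subset _ _).trans hmin.1.1
  have hconn : avoidConn d n (B.erase e) v w := by
    by_contra hc
    exact hnc ⟨hsub', hc⟩
  rcases cross_lemma (d := d) (n := n) (B := B) (e := e) hconn with hvw | ⟨h1, h2⟩
  · exact absurd hvw hmin.1.2
  · rcases h1 with h1 | h1 <;> rcases h2 with h2 | h2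
    · exact absurd (h1.trans h2) hmin.1.2
    · exact Or.inl ⟨h1, h2⟩
    · exact Or.inr ⟨h1, h2⟩
    · exact absurd (h1.trans h2) hmin.1.2

/-- Membership in a minimal cutset is equivalent to being a boundary edge of the
`v`-reachable set. -/
lemma boundary_iff {g : EdgeZ d} (hg : g ∈ boxEdgeFinset d n) :
    g ∈ B ↔ ¬ (Relation.ReflTransGen (stepR d n B) v g.1 ↔
               Relation.ReflTransGen (stepR d n B) v (edgeSnd g)) := by
  constructor
  · intro hgB hiff
    rcases boundary_split hmin hgB with ⟨h1, h2⟩ | ⟨h1, h2⟩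
    · exact not_both_sides hmin (hiff.mp h1) h2
    · exact not_both_sides hmin (hiff.mpr h1) h2
  · intro hx
    by_contra hgB
    apply hx
    have hstep : stepR d n B g.1 (edgeSnd g) := stepR_of_edge hg hgB
    exact ⟨fun h => h.tail hstep, fun h => h.tail (stepR_symm hstep)⟩

end structure_facts

/-! ### Squares -/

/-- The four edges of a unit square with corner `a` spanned by directions `i ≠ j`. -/
def sq (a : Vert d) (i j : Fin d) : Finset (EdgeZ d) :=
  {(a, i), (a, j), (a + unitVec d i, j), (a + unitVec d j, i)}

lemma add_unitVec_ne (a : Vert d) (i : Fin d) : a + unitVec d i ≠ a := by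
  intro h
  have := congrFun h i
  simp only [Pi.add_apply, unitVec_self] at this
  omega

lemma add_unitVec_ne' (a : Vert d) {i j : Fin d} (hij : i ≠ j) :
    a + unitVec d i ≠ a + unitVec d j := by
  intro h
  have := congrFun h i
  simp only [Pi.add_apply, unitVec_self, unitVec_ne _ hij] at this
  omega

lemma unit_comm (a : Vert d) (i j : Fin d) :
    a + unitVec d j + unitVec d i = a + unitVec d i + unitVec d j := add_right_comm a _ _

section sq_facts
variable {a : Vert d} {i j : Fin d} (hij : i ≠ j)
include hij

lemma sq_ne12 : ((a, i) : EdgeZ d) ≠ (a, j) := by simp [Prod.ext_iff, hij]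
lemma sq_ne13 : ((a, i) : EdgeZ d) ≠ (a + unitVec d i, j) := by
  simp [Prod.ext_iff, (add_unitVec_ne a i).symm]
lemma sq_ne14 : ((a, i) : EdgeZ d) ≠ (a + unitVec d j, i) := by
  simp [Prod.ext_iff, (add_unitVec_ne a j).symm]
lemma sq_ne23 : ((a, j) : EdgeZ d) ≠ (a + unitVec d i, j) := by
  simp [Prod.ext_iff, (add_unitVec_ne a i).symm]
lemma sq_ne24 : ((a, j) : EdgeZ d) ≠ (a + unitVec d j, i) := by
  intro h; exact hij ((Prod.ext_iff.mp h).2).symm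
lemma sq_ne34 : ((a + unitVec d i, j) : EdgeZ d) ≠ (a + unitVec d j, i) := by
  intro h; exact hij ((Prod.ext_iff.mp h).2).symm

lemma incPar_sq (x : Vert d) : incPar (sq a i j) x = 0 := by
  have e12 := sq_ne12 (a := a) hij
  have e13 := sq_ne13 (a := a) hij
  have e14 := sq_ne14 (a := a) hij
  have e23 := sq_ne23 (a := a) hij
  have e24 := sq_ne24 (a := a) hij
  have e34 := sq_ne34 (a := a) hij
  have hrw : sq a i j =
      (({((a, i) : EdgeZ d)} ∆ {(a, j)}) ∆ {(a + unitVec d i, j)}) ∆ {(a + unitVec d j, i)} := by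
    ext g
    simp only [sq, Finset.mem_symmDiff, Finset.mem_singleton, Finset.mem_insert]
    constructor
    · rintro (rfl | rfl | rfl | rfl) <;> tauto
    · tauto
  rw [hrw, incPar_symmDiff, incPar_symmDiff, incPar_symmDiff]
  rw [incPar_singleton, incPar_singleton, incPar_singleton, incPar_singleton]
  have h1 : edgeSnd ((a, i) : EdgeZ d) = a + unitVec d i := rfl
  have h2 : edgeSnd ((a, j) : EdgeZ d) = a + unitVec d j := rfl
  have h3 : edgeSnd ((a + unitVec d i, j) : EdgeZ d) = a + unitVec d i + unitVec d j := rfl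
  have h4 : edgeSnd ((a + unitVec d j, i) : EdgeZ d) = a + unitVec d i + unitVec d j := by
    show a + unitVec d j + unitVec d i = _
    exact unit_comm a i j
  rw [h1, h2, h3, h4]
  have c1 := CharTwo.add_self_eq_zero (indZ (x = a))
  have c2 := CharTwo.add_self_eq_zero (indZ (x = a + unitVec d i))
  have c3 := CharTwo.add_self_eq_zero (indZ (x = a + unitVec d j))
  have c4 := CharTwo.add_self_eq_zero (indZ (x = a + unitVec d i + unitVec d j))
  linear_combination c1 + c2 + c3 + c4

end sq_facts

/-- A square crosses the boundary of the `v`-reachable set an even number of times. -/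
lemma sq_inter_card_even {v w : Vert d} {B : Finset (EdgeZ d)}
    (hmin : IsMinimalCutset d n v w B) {a : Vert d} {i j : Fin d} (hij : i ≠ j)
    (hsub : sq a i j ⊆ boxEdgeFinset d n) : Even ((sq a i j ∩ B).card) := by
  classical
  set RV : Vert d → Prop := fun x => Relation.ReflTransGen (stepR d n B) v x with hRV
  have hinter : sq a i j ∩ B = (sq a i j).filter (fun g => g ∈ B) := by
    ext g; simp [Finset.mem_filter, Finset.mem_inter]
  have hmem1 : ((a, i) : EdgeZ d) ∈ sq a i j := by simp [sq]
  have hmem2 : ((a, j) : EdgeZ d) ∈ sq a i j := by simp [sq]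
  have hmem3 : ((a + unitVec d i, j) : EdgeZ d) ∈ sq a i j := by simp [sq]
  have hmem4 : ((a + unitVec d j, i) : EdgeZ d) ∈ sq a i j := by simp [sq]
  have h4snd : edgeSnd ((a + unitVec d j, i) : EdgeZ d) = a + unitVec d i + unitVec d j :=
    unit_comm a i j
  have b1 := boundary_iff (d := d) (n := n) hmin (hsub hmem1)
  have b2 := boundary_iff (d := d) (n := n) hmin (hsub hmem2)
  have b3 := boundary_iff (d := d) (n := n) hmin (hsub hmem3)
  have b4 := boundary_iff (d := d) (n := n) hmin (hsub hmem4)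
  rw [h4snd] at b4
  simp only [← hRV] at b1 b2 b3 b4
  rw [hinter]
  have hsq_ins : sq a i j =
      insert ((a, i) : EdgeZ d) (insert ((a, j) : EdgeZ d)
        (insert ((a + unitVec d i, j) : EdgeZ d) {((a + unitVec d j, i) : EdgeZ d)})) := rfl
  rw [hsq_ins, Finset.filter_insert, Finset.filter_insert, Finset.filter_insert,
    Finset.filter_singleton]
  have e12 := sq_ne12 (a := a) hij
  have e13 := sq_ne13 (a := a) hij
  have e14 := sq_ne14 (a := a) hij
  have e23 := sq_ne23 (a := a) hij
  have e24 := sq_ne24 (a := a) hij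
  have e34 := sq_ne34 (a := a) hij
  have h1' : edgeSnd ((a, i) : EdgeZ d) = a + unitVec d i := rfl
  have h2' : edgeSnd ((a, j) : EdgeZ d) = a + unitVec d j := rfl
  have h3' : edgeSnd ((a + unitVec d i, j) : EdgeZ d) = a + unitVec d i + unitVec d j := rfl
  rw [h1'] at b1; rw [h2'] at b2; rw [h3'] at b3
  by_cases h00 : RV a <;> by_cases h10 : RV (a + unitVec d i) <;>
    by_cases h01 : RV (a + unitVec d j) <;> by_cases h11 : RV (a + unitVec d i + unitVec d j) <;>
    [skip; skip; skip; skip; skip; skip; skip; skip; skip; skip; skip; skip; skip; skip; skip;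
      skip] <;>
  · simp only [b1, b2, b3, b4, h00, h10, h01, h11] at *
    simp_all [Finset.card_insert_of_notMem, e12, e13, e14, e23, e24, e34]
    try decide


/-! ### Every even edge set in the box reduces by squares -/

/-- A rank function on vertices of the box. -/
def rankZ (n : ℕ) (y : Vert d) : ℤ := ∑ k, (y k + n)

def rankN (n : ℕ) (y : Vert d) : ℕ := (rankZ n y).toNat

/-- Potential of an edge set. -/
def Phi (n : ℕ) (z : Finset (EdgeZ d)) : ℕ := ∑ g ∈ z, rankN n (edgeSnd g)

lemma rankZ_nonneg {y : Vert d} (hy : y ∈ boxFinset d n) : 0 ≤ rankZ n y := by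
  apply Finset.sum_nonneg
  intro k _
  have := (mem_boxFinset.mp hy k).1
  omega

lemma rankZ_add_unit (y : Vert d) (i : Fin d) :
    rankZ n (y + unitVec d i) = rankZ n y + 1 := by
  unfold rankZ
  have : ∀ k, (y + unitVec d i) k + (n : ℤ) = (y k + n) + (if k = i then 1 else 0) := by
    intro k
    simp only [Pi.add_apply, unitVec]
    ring
  rw [Finset.sum_congr rfl (fun k _ => this k), Finset.sum_add_distrib]
  simp

lemma incPar_zero_even {z : Finset (EdgeZ d)} {x : Vert d} (h : incPar z x = 0) :
    Even ((z.filter fun g => g.1 = x ∨ edgeSnd g = x).card) := by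
  unfold incPar at h
  exact even_iff_two_dvd.mpr ((ZMod.natCast_eq_zero_iff _ 2).mp h)

/-- Reduction step: a nonempty even edge set in the box can be reduced by a box square. -/
lemma exists_reduction {z : Finset (EdgeZ d)} (hz : z ⊆ boxEdgeFinset d n)
    (hne : z.Nonempty) (heven : ∀ x, incPar z x = 0) :
    ∃ (a : Vert d) (i j : Fin d), i ≠ j ∧ sq a i j ⊆ boxEdgeFinset d n ∧
      Phi n (z ∆ sq a i j) < Phi n z := by
  classical
  -- the set of vertices incident to z
  set V : Finset (Vert d) := z.image (fun g => g.1) ∪ z.image edgeSnd with hV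
  have hVne : V.Nonempty := by
    obtain ⟨g, hg⟩ := hne
    exact ⟨g.1, Finset.mem_union_left _ (Finset.mem_image_of_mem _ hg)⟩
  obtain ⟨x, hxV, hxmax⟩ := Finset.exists_max_image V (rankZ n) hVne
  -- no edge of z is based at x
  have F1 : ∀ i : Fin d, ((x, i) : EdgeZ d) ∉ z := by
    intro i hxi
    have hsnd : (x + unitVec d i) ∈ V :=
      Finset.mem_union_right _ (Finset.mem_image_of_mem _ hxi)
    have := hxmax _ hsnd
    rw [rankZ_add_unit] at this
    omega
  have hbase : ∀ g ∈ z, g.1 ≠ x := by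
    intro g hg hx1
    have : g = (x, g.2) := by rw [← hx1]
    exact F1 g.2 (this ▸ hg)
  -- x is the head of some edge
  have hxhead : ∃ g₀ ∈ z, edgeSnd g₀ = x := by
    rcases Finset.mem_union.mp hxV with h | h
    · obtain ⟨g, hg, hg1⟩ := Finset.mem_image.mp h
      exact absurd hg1 (hbase g hg)
    · obtain ⟨g, hg, hg1⟩ := Finset.mem_image.mp h
      exact ⟨g, hg, hg1⟩
  set inc : Finset (EdgeZ d) := z.filter (fun g => g.1 = x ∨ edgeSnd g = x) with hinc
  have hincne : inc.Nonempty := by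
    obtain ⟨g₀, hg₀, hsnd⟩ := hxhead
    exact ⟨g₀, Finset.mem_filter.mpr ⟨hg₀, Or.inr hsnd⟩⟩
  have hinceven : Even inc.card := incPar_zero_even (heven x)
  have h2 : 1 < inc.card := by
    obtain ⟨t, ht⟩ := hinceven
    have := Finset.card_pos.mpr hincne
    omega
  obtain ⟨g, hg, g', hg', hgg'⟩ := Finset.one_lt_card.mp h2
  have hgz := (Finset.mem_filter.mp hg).1
  have hg'z := (Finset.mem_filter.mp hg').1
  have hgsnd : edgeSnd g = x := by
    rcases (Finset.mem_filter.mp hg).2 with h | h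
    · exact absurd h (hbase g hgz)
    · exact h
  have hg'snd : edgeSnd g' = x := by
    rcases (Finset.mem_filter.mp hg').2 with h | h
    · exact absurd h (hbase g' hg'z)
    · exact h
  set i := g.2 with hi
  set j := g'.2 with hj
  have hgsnd' : g.1 + unitVec d i = x := hgsnd
  have hg'snd' : g'.1 + unitVec d j = x := hg'snd
  have hg1 : g.1 = x - unitVec d i := eq_sub_of_add_eq hgsnd'
  have hg'1 : g'.1 = x - unitVec d j := eq_sub_of_add_eq hg'snd'
  have hij : i ≠ j := by
    intro hij'
    apply hgg'
    have h1 : g.1 = g'.1 := by rw [hg1, hg'1, hij']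
    exact Prod.ext_iff.mpr ⟨h1, hij'⟩
  set a : Vert d := g.1 - unitVec d j with ha
  have haj : a + unitVec d j = g.1 := sub_add_cancel g.1 _
  have hai : a + unitVec d i = g'.1 := by rw [ha, hg1, hg'1]; abel
  have hx : a + unitVec d i + unitVec d j = x := by
    rw [hai, hg'1]; exact sub_add_cancel x _
  have hgbox := mem_boxEdgeFinset.mp (hz hgz)
  have hg'box := mem_boxEdgeFinset.mp (hz hg'z)
  have habox : a ∈ boxFinset d n := by
    rw [mem_boxFinset]
    intro k
    have hcase : a k = g.1 k ∨ a k = g'.1 k := by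
      by_cases hk : k = j
      · right
        have hki : k ≠ i := by rw [hk]; exact Ne.symm hij
        have e1 : unitVec d j k = 1 := by rw [hk]; exact unitVec_self d j
        have e2 : unitVec d i k = 0 := unitVec_ne d hki
        have h1 : a k = g.1 k - 1 := by rw [ha]; simp [Pi.sub_apply, e1]
        have h2 : g.1 k = x k := by rw [hg1]; simp [Pi.sub_apply, e2]
        have h3 : g'.1 k = x k - 1 := by rw [hg'1]; simp [Pi.sub_apply, e1]
        omega
      · left
        have e1 : unitVec d j k = 0 := unitVec_ne d hk
        rw [ha]; simp [Pi.sub_apply, e1]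
    rcases hcase with h | h
    · rw [h]; exact mem_boxFinset.mp hgbox.1 k
    · rw [h]; exact mem_boxFinset.mp hg'box.1 k
  have hgeq : g = ((a + unitVec d j, i) : EdgeZ d) := Prod.ext_iff.mpr ⟨haj.symm, rfl⟩
  have hg'eq : g' = ((a + unitVec d i, j) : EdgeZ d) := Prod.ext_iff.mpr ⟨hai.symm, rfl⟩
  have hsqsub : sq a i j ⊆ boxEdgeFinset d n := by
    intro u hu
    have hu' : u = ((a, i) : EdgeZ d) ∨ u = (a, j) ∨ u = (a + unitVec d i, j) ∨
        u = (a + unitVec d j, i) := by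
      simpa [sq] using hu
    rcases hu' with rfl | rfl | rfl | rfl
    · exact mem_boxEdgeFinset.mpr ⟨habox, by rw [show edgeSnd ((a, i) : EdgeZ d) = a + unitVec d i from rfl, hai]; exact hg'box.1⟩
    · exact mem_boxEdgeFinset.mpr ⟨habox, by rw [show edgeSnd ((a, j) : EdgeZ d) = a + unitVec d j from rfl, haj]; exact hgbox.1⟩
    · exact hg'eq ▸ hz hg'z
    · exact hgeq ▸ hz hgz
  refine ⟨a, i, j, hij, hsqsub, ?_⟩
  set s := sq a i j with hs
  have hgs : g ∈ s := by rw [hgeq]; simp [hs, sq]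
  have hg's : g' ∈ s := by rw [hg'eq]; simp [hs, sq]
  -- rank inequalities
  have hnn_i : 0 ≤ rankZ n (a + unitVec d i) := rankZ_nonneg (hai ▸ hg'box.1)
  have hnn_j : 0 ≤ rankZ n (a + unitVec d j) := rankZ_nonneg (haj ▸ hgbox.1)
  have hr_i : rankZ n (a + unitVec d i) + 1 = rankZ n x := by
    rw [← hx, rankZ_add_unit (a + unitVec d i) j]
  have hr_j : rankZ n (a + unitVec d j) + 1 = rankZ n x := by
    have hx' : a + unitVec d j + unitVec d i = x := by rw [unit_comm]; exact hx
    rw [← hx', rankZ_add_unit (a + unitVec d j) i]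
  have hNi : rankN n (a + unitVec d i) < rankN n x := by unfold rankN; omega
  have hNj : rankN n (a + unitVec d j) < rankN n x := by unfold rankN; omega
  -- Phi computations
  have hsub1 : s \ z ⊆ {((a, i) : EdgeZ d), (a, j)} := by
    intro u hu
    obtain ⟨hus, huz⟩ := Finset.mem_sdiff.mp hu
    have hu' : u = ((a, i) : EdgeZ d) ∨ u = (a, j) ∨ u = (a + unitVec d i, j) ∨
        u = (a + unitVec d j, i) := by simpa [hs, sq] using hus
    rcases hu' with rfl | rfl | rfl | rfl
    · simp
    · simp
    · exact absurd (hg'eq ▸ hg'z) huz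
    · exact absurd (hgeq ▸ hgz) huz
  have key1 : Phi n (s \ z) ≤ rankN n (a + unitVec d i) + rankN n (a + unitVec d j) := by
    have h1 : Phi n (s \ z) ≤ Phi n {((a, i) : EdgeZ d), (a, j)} :=
      Finset.sum_le_sum_of_subset hsub1
    have h2 : Phi n {((a, i) : EdgeZ d), (a, j)} =
        rankN n (a + unitVec d i) + rankN n (a + unitVec d j) := by
      unfold Phi
      rw [Finset.sum_pair (sq_ne12 hij)]
      rfl
    omega
  have key2 : rankN n x + rankN n x ≤ Phi n (z ∩ s) := by
    have hpair : ({g, g'} : Finset (EdgeZ d)) ⊆ z ∩ s := by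
      intro u hu
      rcases Finset.mem_insert.mp hu with rfl | hu
      · exact Finset.mem_inter.mpr ⟨hgz, hgs⟩
      · rw [Finset.mem_singleton.mp hu]
        exact Finset.mem_inter.mpr ⟨hg'z, hg's⟩
    have h1 : Phi n {g, g'} ≤ Phi n (z ∩ s) := Finset.sum_le_sum_of_subset hpair
    have h2 : Phi n {g, g'} = rankN n x + rankN n x := by
      unfold Phi
      rw [Finset.sum_pair hgg', hgsnd, hg'snd]
    omega
  have hzsplit : Phi n z = Phi n (z \ s) + Phi n (z ∩ s) := by
    unfold Phi
    rw [← Finset.sum_union (Finset.disjoint_sdiff_inter z s), Finset.sdiff_union_inter]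
  have hsymm_eq : z ∆ s = (z \ s) ∪ (s \ z) := by
    ext u; simp [Finset.mem_symmDiff, Finset.mem_union, Finset.mem_sdiff]
  have hdsplit : Phi n (z ∆ s) = Phi n (z \ s) + Phi n (s \ z) := by
    unfold Phi
    rw [hsymm_eq, Finset.sum_union disjoint_sdiff_sdiff]
  omega

/-- Even parity of symmetric differences of cardinalities. -/
lemma even_card_symmDiff {α : Type*} [DecidableEq α] {A B : Finset α}
    (hA : Even A.card) (hB : Even B.card) : Even ((A ∆ B).card) := by
  have h1 : (A ∪ B).card + (A ∩ B).card = A.card + B.card := Finset.card_union_add_card_inter A B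
  have h2 : (A ∆ B) = (A ∪ B) \ (A ∩ B) := by
    ext a; simp [Finset.mem_symmDiff, Finset.mem_sdiff, Finset.mem_union, Finset.mem_inter]; tauto
  have h3 : (A ∩ B) ⊆ (A ∪ B) := (Finset.inter_subset_left).trans Finset.subset_union_left
  have h4 : (A ∆ B).card + (A ∩ B).card = (A ∪ B).card := by
    rw [h2]; exact Finset.card_sdiff_add_card_eq_card h3
  obtain ⟨ta, hta⟩ := hA
  obtain ⟨tb, htb⟩ := hB
  refine ⟨(A ∆ B).card / 2, by omega⟩

/-- Main invariant: any even edge set of the box meets a "square-closed" edge set `X`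
in an even number of edges. -/
lemma inv_main {X : Finset (EdgeZ d)}
    (hsqX : ∀ (a : Vert d) (i j : Fin d), i ≠ j → sq a i j ⊆ boxEdgeFinset d n →
      Even ((sq a i j ∩ X).card)) :
    ∀ (N : ℕ) (z : Finset (EdgeZ d)), Phi n z ≤ N → z ⊆ boxEdgeFinset d n →
      (∀ x, incPar z x = 0) → Even ((z ∩ X).card) := by
  intro N
  induction N with
  | zero =>
    intro z hPhi hzbox hzeven
    rcases Finset.eq_empty_or_nonempty z with rfl | hne
    · simp
    · obtain ⟨a, i, j, hij, hsub, hlt⟩ := exists_reduction hzbox hne hzeven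
      omega
  | succ N ih =>
    intro z hPhi hzbox hzeven
    rcases Finset.eq_empty_or_nonempty z with rfl | hne
    · simp
    · obtain ⟨a, i, j, hij, hsub, hlt⟩ := exists_reduction hzbox hne hzeven
      set s := sq a i j with hs
      have h1 : (z ∆ s) ⊆ boxEdgeFinset d n := by
        intro u hu
        rcases Finset.mem_symmDiff.mp hu with ⟨h, _⟩ | ⟨h, _⟩
        · exact hzbox h
        · exact hsub h
      have h2 : ∀ x, incPar (z ∆ s) x = 0 := by
        intro x
        rw [incPar_symmDiff, hzeven, incPar_sq hij, add_zero]
      have hEven1 : Even (((z ∆ s) ∩ X).card) := ih (z ∆ s) (by omega) h1 h2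
      have hEven2 : Even ((s ∩ X).card) := hsqX a i j hij hsub
      have hzx : z ∩ X = (((z ∆ s) ∩ X) ∆ (s ∩ X)) := by
        ext u
        simp only [Finset.mem_symmDiff, Finset.mem_inter]
        tauto
      rw [hzx]
      exact even_card_symmDiff hEven1 hEven2


/-! ### Square-connectivity of minimal cutsets -/

/-- Two edges are `sqAdj`-related (w.r.t. `B`) if both are in `B` and lie on a common
unit square. -/
def sqAdj (B : Finset (EdgeZ d)) (g h : EdgeZ d) : Prop :=
  g ∈ B ∧ h ∈ B ∧ ∃ (a : Vert d) (i j : Fin d), i ≠ j ∧ g ∈ sq a i j ∧ h ∈ sq a i j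

section conn
variable {v w : Vert d} {B : Finset (EdgeZ d)} (hmin : IsMinimalCutset d n v w B)
include hmin

lemma split_pair {e : EdgeZ d} (he : e ∈ B) :
    ∃ p q : Vert d, Relation.ReflTransGen (stepR d n B) v p ∧
      Relation.ReflTransGen (stepR d n B) q w ∧
      ∀ x, incPar {e} x = indZ (x = p) + indZ (x = q) := by
  rcases boundary_split hmin he with ⟨h1, h2⟩ | ⟨h1, h2⟩
  · exact ⟨e.1, edgeSnd e, h1, h2, fun x => incPar_singleton e x⟩
  · refine ⟨edgeSnd e, e.1, h1, h2, fun x => ?_⟩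
    rw [incPar_singleton]; ring

/-- **Main connectivity theorem**: a minimal cutset is connected under `sqAdj`. -/
theorem cutset_sq_conn {e f : EdgeZ d} (he : e ∈ B) (hf : f ∈ B) :
    Relation.ReflTransGen (sqAdj B) e f := by
  classical
  by_cases hef : e = f
  · exact hef ▸ Relation.ReflTransGen.refl
  set X : Finset (EdgeZ d) := B.filter (fun g => Relation.ReflTransGen (sqAdj B) e g) with hX
  have heX : e ∈ X := Finset.mem_filter.mpr ⟨he, Relation.ReflTransGen.refl⟩
  -- build the even edge set z
  obtain ⟨pe, qe, hpe, hqe, hpar_e⟩ := split_pair hmin he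
  obtain ⟨pf, qf, hpf, hqf, hpar_f⟩ := split_pair hmin hf
  obtain ⟨E₁, hE₁sub, hE₁par⟩ := walk_parity (d := d) (n := n) (B := B)
    ((avoid_symm hpe).trans hpf)
  obtain ⟨E₂, hE₂sub, hE₂par⟩ := walk_parity (d := d) (n := n) (B := B)
    (hqe.trans (avoid_symm hqf))
  set z : Finset (EdgeZ d) := (({e} ∆ {f}) ∆ (E₁ ∆ E₂)) with hz
  have hzbox : z ⊆ boxEdgeFinset d n := by
    intro u hu
    have hu' : u = e ∨ u = f ∨ u ∈ E₁ ∨ u ∈ E₂ := by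
      rcases Finset.mem_symmDiff.mp hu with ⟨h, _⟩ | ⟨h, _⟩
      · rcases Finset.mem_symmDiff.mp h with ⟨h, _⟩ | ⟨h, _⟩ <;>
          simp only [Finset.mem_singleton] at h <;> tauto
      · rcases Finset.mem_symmDiff.mp h with ⟨h, _⟩ | ⟨h, _⟩ <;> tauto
    rcases hu' with rfl | rfl | h | h
    · exact hmin.1.1 he
    · exact hmin.1.1 hf
    · exact (hE₁sub u h).1
    · exact (hE₂sub u h).1
  have hzeven : ∀ x, incPar z x = 0 := by
    intro x
    rw [hz, incPar_symmDiff, incPar_symmDiff, incPar_symmDiff, hpar_e, hpar_f, hE₁par, hE₂par]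
    have c1 := CharTwo.add_self_eq_zero (indZ (x = pe))
    have c2 := CharTwo.add_self_eq_zero (indZ (x = qe))
    have c3 := CharTwo.add_self_eq_zero (indZ (x = pf))
    have c4 := CharTwo.add_self_eq_zero (indZ (x = qf))
    linear_combination c1 + c2 + c3 + c4
  have hzB : z ∩ B = {e, f} := by
    ext u
    simp only [Finset.mem_inter, hz, Finset.mem_symmDiff, Finset.mem_singleton,
      Finset.mem_insert]
    constructor
    · rintro ⟨hu, huB⟩
      have hE1 : u ∉ E₁ := fun hh => (hE₁sub u hh).2 huB
      have hE2 : u ∉ E₂ := fun hh => (hE₂sub u hh).2 huB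
      tauto
    · rintro (rfl | rfl)
      · have hE1 : u ∉ E₁ := fun hh => (hE₁sub u hh).2 he
        have hE2 : u ∉ E₂ := fun hh => (hE₂sub u hh).2 he
        exact ⟨by tauto, he⟩
      · have hE1 : u ∉ E₁ := fun hh => (hE₁sub u hh).2 hf
        have hE2 : u ∉ E₂ := fun hh => (hE₂sub u hh).2 hf
        exact ⟨by tauto, hf⟩
  -- the invariant
  have hsqX : ∀ (a : Vert d) (i j : Fin d), i ≠ j → sq a i j ⊆ boxEdgeFinset d n →
      Even ((sq a i j ∩ X).card) := by
    intro a i j hij hsub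
    by_cases hex : (sq a i j ∩ X).Nonempty
    · have hXB : sq a i j ∩ X = sq a i j ∩ B := by
        obtain ⟨g₁, hg₁⟩ := hex
        have hg₁sq := (Finset.mem_inter.mp hg₁).1
        have hg₁X := (Finset.mem_inter.mp hg₁).2
        have hg₁B := (Finset.mem_filter.mp hg₁X).1
        have hg₁reach := (Finset.mem_filter.mp hg₁X).2
        ext u
        simp only [Finset.mem_inter]
        constructor
        · rintro ⟨hu1, hu2⟩
          exact ⟨hu1, (Finset.mem_filter.mp hu2).1⟩
        · rintro ⟨hu1, hu2⟩
          refine ⟨hu1, Finset.mem_filter.mpr ⟨hu2, ?_⟩⟩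
          exact hg₁reach.tail ⟨hg₁B, hu2, a, i, j, hij, hg₁sq, hu1⟩
      rw [hXB]
      exact sq_inter_card_even hmin hij hsub
    · rw [Finset.not_nonempty_iff_eq_empty] at hex
      rw [hex]; simp
  have hEvenX : Even ((z ∩ X).card) :=
    inv_main hsqX (Phi n z) z le_rfl hzbox hzeven
  have hXsubB : X ⊆ B := Finset.filter_subset _ _
  have hzX : z ∩ X = {e, f} ∩ X := by
    rw [← hzB]
    ext u
    simp only [Finset.mem_inter]
    constructor
    · rintro ⟨h1, h2⟩; exact ⟨⟨h1, hXsubB h2⟩, h2⟩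
    · rintro ⟨⟨h1, _⟩, h2⟩; exact ⟨h1, h2⟩
  by_cases hfX : f ∈ X
  · exact (Finset.mem_filter.mp hfX).2
  · exfalso
    have : ({e, f} : Finset (EdgeZ d)) ∩ X = {e} := by
      ext u
      simp only [Finset.mem_inter, Finset.mem_insert, Finset.mem_singleton]
      constructor
      · rintro ⟨rfl | rfl, h2⟩
        · rfl
        · exact absurd h2 hfX
      · rintro rfl; exact ⟨Or.inl rfl, heX⟩
    rw [hzX, this] at hEvenX
    simp at hEvenX
end conn


/-! ### Covering closed walks of connected finite sets -/

section walk
variable {α : Type*} [DecidableEq α] (rr : α → α → Prop)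

/-- The relation `rr` restricted to a finite set. -/
def rIn (S : Finset α) (a b : α) : Prop := a ∈ S ∧ b ∈ S ∧ rr a b

lemma rtg_rIn_mem {S : Finset α} {a b : α} (h : Relation.ReflTransGen (rIn rr S) a b)
    (ha : a ∈ S) : b ∈ S := by
  induction h with
  | refl => exact ha
  | tail _ hst _ => exact hst.2.1

lemma cover_walk (hsym : ∀ {a b : α}, rr a b → rr b a) :
    ∀ (N : ℕ) (S : Finset α) (e₀ : α), S.card ≤ N → e₀ ∈ S →
      (∀ x ∈ S, Relation.ReflTransGen (rIn rr S) e₀ x) →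
      ∃ l : List α, l.head? = some e₀ ∧ l.getLast? = some e₀ ∧ List.Chain' rr l ∧
        l.toFinset = S ∧ l.length ≤ 2 * S.card - 1 := by
  intro N
  induction N with
  | zero =>
    intro S e₀ hcard he₀ _
    exact absurd (Finset.card_pos.mpr ⟨e₀, he₀⟩) (by omega)
  | succ N ih =>
    intro S e₀ hcard he₀ hconn
    set T := S.erase e₀ with hT
    rcases Finset.eq_empty_or_nonempty T with hTe | hTne
    · have hSe : S = {e₀} := by
        apply Finset.eq_singleton_iff_unique_mem.mpr
        refine ⟨he₀, fun x hx => ?_⟩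
        by_contra hne
        exact (Finset.eq_empty_iff_forall_notMem.mp hTe x) (Finset.mem_erase.mpr ⟨hne, hx⟩)
      exact ⟨[e₀], rfl, rfl, List.isChain_singleton _, by simp [hSe], by simp [hSe]⟩
    · obtain ⟨xb, hxb⟩ := hTne
      have hQ : ∀ y, Relation.ReflTransGen (rIn rr S) e₀ y →
          y = e₀ ∨ ∃ h, h ∈ T ∧ rr e₀ h ∧ Relation.ReflTransGen (rIn rr T) h y := by
        intro y hy
        induction hy with
        | refl => exact Or.inl rfl
        | @tail b c hab hbc ihb =>
          rcases ihb with hb | ⟨h, hhT, hrh, hrtg⟩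
          · by_cases hc : c = e₀
            · exact Or.inl hc
            · exact Or.inr ⟨c, Finset.mem_erase.mpr ⟨hc, hbc.2.1⟩, hb ▸ hbc.2.2,
                Relation.ReflTransGen.refl⟩
          · by_cases hc : c = e₀
            · exact Or.inl hc
            · refine Or.inr ⟨h, hhT, hrh, hrtg.tail ?_⟩
              have hbT : b ∈ T := rtg_rIn_mem rr hrtg hhT
              exact ⟨hbT, Finset.mem_erase.mpr ⟨hc, hbc.2.1⟩, hbc.2.2⟩
      have hxbS : xb ∈ S := Finset.mem_of_mem_erase hxb
      rcases hQ xb (hconn xb hxbS) with rfl | ⟨h, hhT, hrh, _⟩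
      · exact absurd rfl (Finset.mem_erase.mp hxb).1
      · set C := T.filter (fun y => Relation.ReflTransGen (rIn rr T) h y) with hC
        have hhC : h ∈ C := Finset.mem_filter.mpr ⟨hhT, Relation.ReflTransGen.refl⟩
        have hCconn : ∀ y ∈ C, Relation.ReflTransGen (rIn rr C) h y := by
          intro y hy
          have hy' : Relation.ReflTransGen (rIn rr T) h y := (Finset.mem_filter.mp hy).2
          clear hy
          induction hy' with
          | refl => exact Relation.ReflTransGen.refl
          | @tail b c hab hbc ihb =>
            have hbC : b ∈ C := Finset.mem_filter.mpr ⟨rtg_rIn_mem rr hab hhT, hab⟩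
            have hcC : c ∈ C := Finset.mem_filter.mpr ⟨hbc.2.1, hab.tail hbc⟩
            exact ihb.tail ⟨hbC, hcC, hbc.2.2⟩
        set S' := S \ C with hS'
        have he₀C : e₀ ∉ C := by
          intro hc
          exact (Finset.mem_erase.mp ((Finset.mem_filter.mp hc).1)).1 rfl
        have he₀S' : e₀ ∈ S' := Finset.mem_sdiff.mpr ⟨he₀, he₀C⟩
        have hstep_out : ∀ b c, b ∈ C → rIn rr S b c → c ∈ C ∨ c = e₀ := by
          intro b c hbC hbc
          by_cases hc : c = e₀
          · exact Or.inr hc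
          · left
            have hcT : c ∈ T := Finset.mem_erase.mpr ⟨hc, hbc.2.1⟩
            have hbT : b ∈ T := (Finset.mem_filter.mp hbC).1
            exact Finset.mem_filter.mpr ⟨hcT, (Finset.mem_filter.mp hbC).2.tail ⟨hbT, hcT, hbc.2.2⟩⟩
        have hS'conn : ∀ y ∈ S', Relation.ReflTransGen (rIn rr S') e₀ y := by
          intro y hyS'
          have key : ∀ y, Relation.ReflTransGen (rIn rr S) e₀ y →
              y ∈ C ∨ (y ∈ S' ∧ Relation.ReflTransGen (rIn rr S') e₀ y) := by
            intro y hy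
            induction hy with
            | refl => exact Or.inr ⟨he₀S', Relation.ReflTransGen.refl⟩
            | @tail b c hab hbc ihb =>
              rcases ihb with hbC | ⟨hbS', hreach⟩
              · rcases hstep_out b c hbC hbc with hcC | rfl
                · exact Or.inl hcC
                · exact Or.inr ⟨he₀S', Relation.ReflTransGen.refl⟩
              · by_cases hcC : c ∈ C
                · exact Or.inl hcC
                · have hcS' : c ∈ S' := Finset.mem_sdiff.mpr ⟨hbc.2.1, hcC⟩
                  exact Or.inr ⟨hcS', hreach.tail ⟨hbS', hcS', hbc.2.2⟩⟩
          rcases key y (hconn y (Finset.mem_sdiff.mp hyS').1) with hC' | ⟨_, hr⟩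
          · exact absurd hC' (Finset.mem_sdiff.mp hyS').2
          · exact hr
        have hCsubS : C ⊆ S := (Finset.filter_subset _ _).trans (Finset.erase_subset _ _)
        have hCS : C.card + S'.card = S.card := by
          have h1 : S'.card = S.card - C.card := Finset.card_sdiff_of_subset hCsubS
          have h2 : C.card ≤ S.card := Finset.card_le_card hCsubS
          omega
        have hCpos : 0 < C.card := Finset.card_pos.mpr ⟨h, hhC⟩
        have hS'pos : 0 < S'.card := Finset.card_pos.mpr ⟨e₀, he₀S'⟩
        obtain ⟨l₁, hl₁h, hl₁last, hl₁chain, hl₁set, hl₁len⟩ := ih C h (by omega) hhC hCconn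
        obtain ⟨l₂, hl₂h, hl₂last, hl₂chain, hl₂set, hl₂len⟩ := ih S' e₀ (by omega) he₀S' hS'conn
        have hl₁ne : l₁ ≠ [] := by intro hl; rw [hl] at hl₁h; simp at hl₁h
        have hl₂ne : l₂ ≠ [] := by intro hl; rw [hl] at hl₂h; simp at hl₂h
        refine ⟨e₀ :: (l₁ ++ l₂), rfl, ?_, ?_, ?_, ?_⟩
        · rw [List.getLast?_cons, List.getLast?_append]
          cases hg : l₂.getLast? with
          | none => exact absurd (List.getLast?_eq_none_iff.mp hg) hl₂ne
          | some a => rw [hg] at hl₂last; simpa [hg] using hl₂last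
        · rw [List.Chain', List.isChain_cons]
          constructor
          · intro y hy
            rw [List.head?_append, hl₁h] at hy
            simp at hy
            exact hy ▸ hrh
          · rw [List.isChain_append]
            refine ⟨hl₁chain, hl₂chain, fun x hx y hy => ?_⟩
            rw [hl₁last] at hx
            rw [hl₂h] at hy
            simp at hx hy
            subst hx
            subst hy
            exact hsym hrh
        · rw [List.toFinset_cons, List.toFinset_append, hl₁set, hl₂set]
          have hun : C ∪ S' = S := by
            rw [hS', Finset.union_sdiff_of_subset hCsubS]
          rw [hun]
          exact Finset.insert_eq_self.mpr he₀
        · simp only [List.length_cons, List.length_append]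
          omega

end walk


/-! ### Step relation on edges, and deviation bounds -/

/-- Bases of edges differ by at most 1 in every coordinate. -/
def eStep (g h : EdgeZ d) : Prop := ∀ j, |g.1 j - h.1 j| ≤ 1

lemma eStep_symm {g h : EdgeZ d} (hst : eStep g h) : eStep h g := by
  intro j; rw [abs_sub_comm]; exact hst j

lemma base_cases {g : EdgeZ d} {a : Vert d} {i j : Fin d} (hg : g ∈ sq a i j) :
    g.1 = a ∨ g.1 = a + unitVec d i ∨ g.1 = a + unitVec d j := by
  have hg' : g = ((a, i) : EdgeZ d) ∨ g = (a, j) ∨ g = (a + unitVec d i, j) ∨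
      g = (a + unitVec d j, i) := by simpa [sq] using hg
  rcases hg' with rfl | rfl | rfl | rfl <;> simp

lemma unitVec_cases (i k : Fin d) : unitVec d i k = 0 ∨ unitVec d i k = 1 := by
  unfold unitVec; split <;> simp

lemma eStep_of_sqAdj {B : Finset (EdgeZ d)} {g h : EdgeZ d} (hadj : sqAdj B g h) :
    eStep g h := by
  obtain ⟨_, _, a, i, j, hij, hg, hh⟩ := hadj
  intro k
  have e1 := unitVec_cases i k
  have e2 := unitVec_cases j k
  rcases base_cases hg with h1 | h1 | h1 <;> rcases base_cases hh with h2 | h2 | h2 <;>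
    rw [h1, h2] <;> simp only [Pi.add_apply, abs_le] <;> omega

section anchor
variable {v w : Vert d} {B : Finset (EdgeZ d)} (hmin : IsMinimalCutset d n v w B)
include hmin

/-- A covering walk of a minimal cutset. -/
lemma cutset_walk {e₀ : EdgeZ d} (he₀ : e₀ ∈ B) :
    ∃ l : List (EdgeZ d), l.head? = some e₀ ∧ List.Chain' eStep l ∧ l.toFinset = B ∧
      l.length ≤ 2 * B.card - 1 := by
  have hconn : ∀ x ∈ B, Relation.ReflTransGen (rIn eStep B) e₀ x := by
    intro x hx
    exact Relation.ReflTransGen.mono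
      (fun a b hab => ⟨hab.1, hab.2.1, eStep_of_sqAdj hab⟩) _ _ (cutset_sq_conn hmin he₀ hx)
  obtain ⟨l, h1, _, h3, h4, h5⟩ := cover_walk eStep (fun hab => eStep_symm hab)
    B.card B e₀ le_rfl he₀ hconn
  exact ⟨l, h1, h3, h4, h5⟩

omit hmin in
lemma chain_dev : ∀ (l : List (EdgeZ d)) (x₀ : EdgeZ d), l.head? = some x₀ →
    List.Chain' eStep l → ∀ g ∈ l, ∀ j, |g.1 j - x₀.1 j| ≤ (l.length : ℤ) - 1 := by
  intro l
  induction l with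
  | nil => simp
  | cons a t iht =>
    intro x₀ hh hchain g hg j
    have ha : a = x₀ := by simpa using hh
    subst ha
    rcases List.mem_cons.mp hg with rfl | hgt
    · simp
    · cases t with
      | nil => simp at hgt
      | cons b t' =>
        have h1 : eStep a b := (List.isChain_cons_cons.mp hchain).1
        have h2 := iht b rfl (List.isChain_cons_cons.mp hchain).2 g hgt j
        have h3 := h1 j
        have habs := abs_sub_le (g.1 j) (b.1 j) (a.1 j)
        have h4 : |b.1 j - a.1 j| ≤ 1 := by rw [abs_sub_comm]; exact h3
        simp only [List.length_cons] at h2 ⊢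
        push_cast at h2 ⊢
        linarith

/-! ### Sweeping paths avoiding the cutset -/

variable {z₀ : Vert d} {M : ℤ} (hBnear : ∀ g ∈ B, ∀ k, |g.1 k - z₀ k| ≤ M)
include hBnear

omit hmin in
lemma sweep {lcoord jj : Fin d} (hjl : jj ≠ lcoord) {t : ℤ}
    (ht1 : -(n:ℤ) ≤ t) (ht2 : t ≤ n) :
    ∀ (k : ℕ) (p : Vert d), p ∈ boxFinset d n → M < |p jj - z₀ jj| →
      (t - p lcoord).natAbs = k →
      Relation.ReflTransGen (stepR d n B) p (Function.update p lcoord t) := by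
  intro k
  induction k with
  | zero =>
    intro p hp hsafe hk
    have ht : t = p lcoord := by omega
    rw [ht, Function.update_eq_self]
  | succ k ihk =>
    intro p hp hsafe hk
    by_cases hdir : p lcoord < t
    · set p' := Function.update p lcoord (p lcoord + 1) with hp'
      have hup : p + unitVec d lcoord = p' := by
        funext u
        by_cases hu : u = lcoord
        · subst hu; simp [hp', Pi.add_apply, unitVec_self]
        · simp [hp', Pi.add_apply, unitVec_ne _ hu, Function.update_of_ne hu]
      have hp'box : p' ∈ boxFinset d n := by
        rw [mem_boxFinset]
        intro u
        by_cases hu : u = lcoord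
        · subst hu
          have := (mem_boxFinset.mp hp u).1
          simp only [hp', Function.update_self]
          omega
        · simp only [hp', Function.update_of_ne hu]
          exact mem_boxFinset.mp hp u
      have hedge : ((p, lcoord) : EdgeZ d) ∈ boxEdgeFinset d n :=
        mem_boxEdgeFinset.mpr ⟨hp,
          by rw [show edgeSnd ((p, lcoord) : EdgeZ d) = p + unitVec d lcoord from rfl, hup]
             exact hp'box⟩
      have hnotB : ((p, lcoord) : EdgeZ d) ∉ B := by
        intro heB
        have hcontra : |p jj - z₀ jj| ≤ M := hBnear _ heB jj
        linarith
      have hstep : stepR d n B p p' :=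
        ⟨(p, lcoord), hedge, hnotB, Or.inl ⟨rfl,
          by rw [show edgeSnd ((p, lcoord) : EdgeZ d) = p + unitVec d lcoord from rfl, hup]⟩⟩
      have hsafe' : M < |p' jj - z₀ jj| := by
        rw [hp', Function.update_of_ne hjl]; exact hsafe
      have hk' : (t - p' lcoord).natAbs = k := by
        simp only [hp', Function.update_self]; omega
      have hrec := ihk p' hp'box hsafe' hk'
      have hupd : Function.update p' lcoord t = Function.update p lcoord t := by
        rw [hp', Function.update_idem]
      exact (Relation.ReflTransGen.single hstep).trans (hupd ▸ hrec)
    · have hlt : t < p lcoord := by omega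
      set p' := Function.update p lcoord (p lcoord - 1) with hp'
      have hup : p' + unitVec d lcoord = p := by
        funext u
        by_cases hu : u = lcoord
        · subst hu; simp [hp', Pi.add_apply, unitVec_self]
        · simp [hp', Pi.add_apply, unitVec_ne _ hu, Function.update_of_ne hu]
      have hp'box : p' ∈ boxFinset d n := by
        rw [mem_boxFinset]
        intro u
        by_cases hu : u = lcoord
        · subst hu
          have := (mem_boxFinset.mp hp u).1
          have := (mem_boxFinset.mp hp u).2
          simp only [hp', Function.update_self]
          omega
        · simp only [hp', Function.update_of_ne hu]
          exact mem_boxFinset.mp hp u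
      have hedge : ((p', lcoord) : EdgeZ d) ∈ boxEdgeFinset d n :=
        mem_boxEdgeFinset.mpr ⟨hp'box,
          by rw [show edgeSnd ((p', lcoord) : EdgeZ d) = p' + unitVec d lcoord from rfl, hup]
             exact hp⟩
      have hsafe' : M < |p' jj - z₀ jj| := by
        rw [hp', Function.update_of_ne hjl]; exact hsafe
      have hnotB : ((p', lcoord) : EdgeZ d) ∉ B := by
        intro heB
        have hcontra : |p' jj - z₀ jj| ≤ M := hBnear _ heB jj
        linarith
      have hstep : stepR d n B p p' :=
        ⟨(p', lcoord), hedge, hnotB, Or.inr ⟨rfl,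
          by rw [show edgeSnd ((p', lcoord) : EdgeZ d) = p' + unitVec d lcoord from rfl, hup]⟩⟩
      have hk' : (t - p' lcoord).natAbs = k := by
        simp only [hp', Function.update_self]; omega
      have hrec := ihk p' hp'box hsafe' hk'
      have hupd : Function.update p' lcoord t = Function.update p lcoord t := by
        rw [hp', Function.update_idem]
      exact (Relation.ReflTransGen.single hstep).trans (hupd ▸ hrec)

omit hmin in
lemma stageB {q : Vert d} (hq : q ∈ boxFinset d n) (hqsafe : ∀ j, M < |q j - z₀ j|)
    {kk : Fin d} :
    ∀ (count : ℕ) (p : Vert d), p ∈ boxFinset d n →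
      ((Finset.univ.filter (fun l => p l ≠ q l)).card ≤ count) → p kk = q kk →
      Relation.ReflTransGen (stepR d n B) p q := by
  intro count
  induction count with
  | zero =>
    intro p hp hcard hkk
    have hpq : p = q := by
      funext l
      by_contra hne
      have : l ∈ Finset.univ.filter (fun l => p l ≠ q l) := by
        simp [Finset.mem_filter, hne]
      have := Finset.card_pos.mpr ⟨l, this⟩
      omega
    rw [hpq]
  | succ c ihc =>
    intro p hp hcard hkk
    by_cases hpq : p = q
    · rw [hpq]
    · have hex : ∃ l, p l ≠ q l := by
        by_contra hno
        push_neg at hno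
        exact hpq (funext hno)
      obtain ⟨lc, hlc⟩ := hex
      have hlkk : kk ≠ lc := by
        intro hh; rw [hh] at hkk; exact hlc hkk
      have hsafe : M < |p kk - z₀ kk| := by rw [hkk]; exact hqsafe kk
      have hql := mem_boxFinset.mp hq lc
      have hsw := sweep hBnear hlkk hql.1 hql.2 (q lc - p lc).natAbs p hp hsafe rfl
      set p' := Function.update p lc (q lc) with hp'
      have hp'box : p' ∈ boxFinset d n := by
        rw [mem_boxFinset]
        intro u
        by_cases hu : u = lc
        · subst hu; simp only [hp', Function.update_self]; exact hql
        · simp only [hp', Function.update_of_ne hu]; exact mem_boxFinset.mp hp u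
      have hp'kk : p' kk = q kk := by
        rw [hp', Function.update_of_ne hlkk]; exact hkk
      have hsubset : Finset.univ.filter (fun l => p' l ≠ q l) ⊆
          (Finset.univ.filter (fun l => p l ≠ q l)).erase lc := by
        intro u hu
        have hu' : p' u ≠ q u := (Finset.mem_filter.mp hu).2
        have hune : u ≠ lc := by
          intro hh; subst hh
          exact hu' (by rw [hp', Function.update_self])
        rw [hp', Function.update_of_ne hune] at hu'
        exact Finset.mem_erase.mpr ⟨hune, by simp [Finset.mem_filter, hu']⟩
      have hcard' : (Finset.univ.filter (fun l => p' l ≠ q l)).card ≤ c := by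
        have h1 := Finset.card_le_card hsubset
        have h2 : lc ∈ Finset.univ.filter (fun l => p l ≠ q l) := by
          simp [Finset.mem_filter, hlc]
        have h3 := Finset.card_erase_of_mem h2
        have h4 := Finset.card_pos.mpr ⟨lc, h2⟩
        omega
      exact hsw.trans (ihc p' hp'box hcard' hp'kk)

omit hmin in
lemma reach_safe {q : Vert d} (hq : q ∈ boxFinset d n) (hqsafe : ∀ j, M < |q j - z₀ j|)
    (hd : 2 ≤ d) {p : Vert d} (hp : p ∈ boxFinset d n)
    (hpsafe : ∃ jj, M < |p jj - z₀ jj|) :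
    Relation.ReflTransGen (stepR d n B) p q := by
  obtain ⟨jj, hjj⟩ := hpsafe
  have hkk : ∃ kk : Fin d, kk ≠ jj := by
    by_cases h0 : jj = ⟨0, by omega⟩
    · exact ⟨⟨1, by omega⟩, by rw [h0]; intro hh; simpa using congrArg Fin.val hh⟩
    · exact ⟨⟨0, by omega⟩, fun hh => h0 hh.symm⟩
  obtain ⟨kk, hkkjj⟩ := hkk
  have hqk := mem_boxFinset.mp hq kk
  have hsw := sweep hBnear (Ne.symm hkkjj) hqk.1 hqk.2 (q kk - p kk).natAbs p hp hjj rfl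
  set p₁ := Function.update p kk (q kk) with hp₁
  have hp₁box : p₁ ∈ boxFinset d n := by
    rw [mem_boxFinset]
    intro u
    by_cases hu : u = kk
    · subst hu; simp only [hp₁, Function.update_self]; exact hqk
    · simp only [hp₁, Function.update_of_ne hu]; exact mem_boxFinset.mp hp u
  have hp₁kk : p₁ kk = q kk := by rw [hp₁, Function.update_self]
  exact hsw.trans (stageB hBnear hq hqsafe _ p₁ hp₁box le_rfl hp₁kk)

end anchor


/-! ### The anchoring lemma -/

section anchor2
variable {v w : Vert d} {B : Finset (EdgeZ d)} (hmin : IsMinimalCutset d n v w B)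
include hmin

lemma anchor_exists (hd : 2 ≤ d) (hBne : B.Nonempty)
    (hv : v ∈ boxFinset d n) (hw : w ∈ boxFinset d n) :
    ∃ e₀ ∈ B, (∀ k, |e₀.1 k - v k| ≤ 4*(B.card:ℤ)+4) ∨
      (∀ k, |e₀.1 k - w k| ≤ 4*(B.card:ℤ)+4) := by
  by_contra hno
  push_neg at hno
  obtain ⟨e', he'⟩ := hBne
  set m : ℤ := (B.card : ℤ) with hm
  have hm1 : 1 ≤ m := by
    have := Finset.card_pos.mpr ⟨e', he'⟩
    omega
  set z₀ := e'.1 with hz₀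
  obtain ⟨l, hlh, hlchain, hlset, hllen⟩ := cutset_walk hmin he'
  have hBnear : ∀ g ∈ B, ∀ k, |g.1 k - z₀ k| ≤ 2*m := by
    intro g hg k
    have hgl : g ∈ l := by
      rw [← hlset] at hg
      exact List.mem_toFinset.mp hg
    have hdev := chain_dev l e' hlh hlchain g hgl k
    have hlen' : (l.length : ℤ) ≤ 2*m - 1 := by omega
    linarith
  have hz₀box : z₀ ∈ boxFinset d n := (mem_boxEdgeFinset.mp (hmin.1.1 he')).1
  by_cases hn : (n:ℤ) ≤ 2*m + 1
  · obtain ⟨k, hk⟩ := (hno e' he').1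
    have h1 := mem_boxFinset.mp hz₀box k
    have h2 := mem_boxFinset.mp hv k
    have h3 : |z₀ k - v k| ≤ 2*(n:ℤ) := abs_le.mpr ⟨by linarith, by linarith⟩
    linarith
  · push_neg at hn
    set q : Vert d := fun j => if z₀ j ≤ 0 then (n:ℤ) else -(n:ℤ) with hq
    have hqbox : q ∈ boxFinset d n := by
      rw [mem_boxFinset]
      intro i
      by_cases h : z₀ i ≤ 0 <;> simp only [hq, h, if_true, if_false] <;> constructor <;> omega
    have hqsafe : ∀ j, 2*m < |q j - z₀ j| := by
      intro j
      have hzb := mem_boxFinset.mp hz₀box j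
      by_cases h : z₀ j ≤ 0
      · have heq : q j = (n:ℤ) := by simp [hq, h]
        rw [heq]
        have h5 := le_abs_self ((n:ℤ) - z₀ j)
        linarith
      · have heq : q j = -(n:ℤ) := by simp [hq, h]
        rw [heq]
        have h5 := neg_le_abs (-(n:ℤ) - z₀ j)
        push_neg at h
        linarith
    obtain ⟨kv, hkv⟩ := (hno e' he').1
    obtain ⟨kw, hkw⟩ := (hno e' he').2
    have hvsafe : ∃ jj, 2*m < |v jj - z₀ jj| := ⟨kv, by rw [abs_sub_comm]; linarith⟩
    have hwsafe : ∃ jj, 2*m < |w jj - z₀ jj| := ⟨kw, by rw [abs_sub_comm]; linarith⟩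
    have hrv := reach_safe (B := B) hBnear hqbox hqsafe hd hv hvsafe
    have hrw := reach_safe (B := B) hBnear hqbox hqsafe hd hw hwsafe
    exact hmin.1.2 (hrv.trans (avoid_symm hrw))

end anchor2

/-! ### Encoding walks -/

/-- Step alphabet: a displacement in `{-1,0,1}^d` together with a direction. -/
abbrev Sig (d : ℕ) := (Fin d → Fin 3) × Fin d

def applyStep (x : EdgeZ d) (σ : Sig d) : EdgeZ d :=
  (fun j => x.1 j + ((σ.1 j : ℕ) : ℤ) - 1, σ.2)

def encStep (g h : EdgeZ d) : Sig d :=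
  (fun j => if h.1 j - g.1 j ≤ -1 then 0 else if h.1 j - g.1 j = 0 then 1 else 2, h.2)

lemma applyStep_encStep {g h : EdgeZ d} (hst : eStep g h) : applyStep g (encStep g h) = h := by
  unfold applyStep encStep
  refine Prod.ext_iff.mpr ⟨funext fun j => ?_, rfl⟩
  have hj := hst j
  rw [abs_le] at hj
  by_cases h1 : h.1 j - g.1 j ≤ -1
  · simp only [if_pos h1]
    have : (((0 : Fin 3) : ℕ) : ℤ) = 0 := by norm_num
    rw [this]
    omega
  · by_cases h2 : h.1 j - g.1 j = 0
    · simp only [if_neg h1, if_pos h2]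
      have : (((1 : Fin 3) : ℕ) : ℤ) = 1 := by norm_num
      rw [this]
      omega
    · simp only [if_neg h1, if_neg h2]
      have : (((2 : Fin 3) : ℕ) : ℤ) = 2 := by norm_num
      rw [this]
      omega

def decodeList (x : EdgeZ d) : List (Sig d) → List (EdgeZ d)
  | [] => [x]
  | σ :: rest => x :: decodeList (applyStep x σ) rest

def stepsOf : List (EdgeZ d) → List (Sig d)
  | [] => []
  | [_] => []
  | g :: h :: t => encStep g h :: stepsOf (h :: t)

lemma stepsOf_length : ∀ l : List (EdgeZ d), (stepsOf l).length = l.length - 1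
  | [] => rfl
  | [_] => rfl
  | g :: h :: t => by
    show (encStep g h :: stepsOf (h :: t)).length = (g :: h :: t).length - 1
    rw [List.length_cons, stepsOf_length (h :: t)]
    simp

lemma decode_stepsOf : ∀ (l : List (EdgeZ d)) (x : EdgeZ d), l.head? = some x →
    List.Chain' eStep l → decodeList x (stepsOf l) = l := by
  intro l
  induction l with
  | nil => simp
  | cons a t ih =>
    intro x hx hchain
    have hax : a = x := by simpa using hx
    subst hax
    cases t with
    | nil => rfl
    | cons b t' =>
      have h1 : eStep a b := (List.isChain_cons_cons.mp hchain).1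
      show a :: decodeList (applyStep a (encStep a b)) (stepsOf (b :: t')) = a :: b :: t'
      rw [applyStep_encStep h1, ih b rfl (List.isChain_cons_cons.mp hchain).2]

lemma reduce_ofFn_none : ∀ k, (List.ofFn (fun _ : Fin k => (none : Option (Sig d)))).reduceOption = [] := by
  intro k
  induction k with
  | zero => simp
  | succ k ih => rw [List.ofFn_succ]; simpa using ih

lemma reduce_ofFn : ∀ (N : ℕ) (L : List (Sig d)), L.length ≤ N →
    (List.ofFn (fun i : Fin N => L[(i : ℕ)]?)).reduceOption = L := by
  intro N
  induction N with
  | zero =>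
    intro L hL
    have : L = [] := List.eq_nil_of_length_eq_zero (by omega)
    subst this
    simp
  | succ N ih =>
    intro L hL
    cases L with
    | nil =>
      simp only [List.getElem?_nil]
      exact reduce_ofFn_none (N+1)
    | cons a L' =>
      rw [List.ofFn_succ]
      simp only [Fin.val_zero, List.getElem?_cons_zero, Fin.val_succ,
        List.getElem?_cons_succ, List.reduceOption_cons_of_some]
      rw [ih L' (by simpa using hL)]

/-- The ℓ∞ ball as a finset. -/
def ballF (c : Vert d) (r : ℤ) : Finset (Vert d) :=
  Fintype.piFinset fun j => Finset.Icc (c j - r) (c j + r)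

lemma mem_ballF {c x : Vert d} {r : ℤ} : x ∈ ballF c r ↔ ∀ j, |x j - c j| ≤ r := by
  rw [ballF, Fintype.mem_piFinset]
  refine forall_congr' (fun j => ?_)
  rw [Finset.mem_Icc, abs_le]
  omega

lemma card_ballF (c : Vert d) (r : ℕ) : (ballF c (r:ℤ)).card = (2*r+1)^d := by
  rw [ballF, Fintype.card_piFinset]
  have : ∀ j, (Finset.Icc (c j - (r:ℤ)) (c j + r)).card = 2*r+1 := by
    intro j
    rw [Int.card_Icc]
    omega
  rw [Finset.prod_congr rfl (fun j _ => this j)]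
  simp

/-- decoding map -/
def decodeFun (m : ℕ) (t : EdgeZ d × (Fin (2*m) → Option (Sig d))) : Finset (EdgeZ d) :=
  (decodeList t.1 (List.ofFn t.2).reduceOption).toFinset


/-! ### The counting theorem -/

lemma main_count (hd : 2 ≤ d) (m : ℕ) (hm : 1 ≤ m) (v w : Vert d)
    (hv : v ∈ boxFinset d n) (hw : w ∈ boxFinset d n) :
    {B : Finset (EdgeZ d) | IsMinimalCutset d n v w B ∧ B.card = m}.ncard ≤
      (2 * (8*m+9)^d * d) * (3^d * d + 1)^(2*m) := by
  classical
  set r : ℕ := 4*m+4 with hr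
  set A : Finset (EdgeZ d) :=
    (ballF v (r:ℤ) ∪ ballF w (r:ℤ)) ×ˢ (Finset.univ : Finset (Fin d)) with hA
  set T : Finset (EdgeZ d × (Fin (2*m) → Option (Sig d))) := A ×ˢ Finset.univ with hT
  have hsub : {B : Finset (EdgeZ d) | IsMinimalCutset d n v w B ∧ B.card = m} ⊆
      decodeFun m '' ↑T := by
    rintro B ⟨hmin, hcard⟩
    have hBne : B.Nonempty := Finset.card_pos.mp (by omega)
    obtain ⟨e₀, he₀, hanchor⟩ := anchor_exists hmin hd hBne hv hw
    obtain ⟨l, hlh, hlchain, hlset, hllen⟩ := cutset_walk hmin he₀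
    refine ⟨(e₀, fun i => (stepsOf l)[(i:ℕ)]?), ?_, ?_⟩
    · have hcast : ((r:ℕ) : ℤ) = 4*(m:ℤ)+4 := by rw [hr]; push_cast; ring
      have hmem : e₀.1 ∈ ballF v (r:ℤ) ∪ ballF w (r:ℤ) := by
        rcases hanchor with h | h
        · apply Finset.mem_union_left
          rw [mem_ballF]
          intro k
          have h2 := h k
          rw [hcard] at h2
          rw [hcast]
          exact h2
        · apply Finset.mem_union_right
          rw [mem_ballF]
          intro k
          have h2 := h k
          rw [hcard] at h2
          rw [hcast]
          exact h2
      exact Finset.mem_coe.mpr (Finset.mem_product.mpr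
        ⟨Finset.mem_product.mpr ⟨hmem, Finset.mem_univ _⟩, Finset.mem_univ _⟩)
    · show (decodeList e₀ (List.ofFn fun i : Fin (2*m) =>
        (stepsOf l)[(i:ℕ)]?).reduceOption).toFinset = B
      have hsl : (stepsOf l).length ≤ 2*m := by
        rw [stepsOf_length]
        omega
      rw [reduce_ofFn (2*m) _ hsl, decode_stepsOf l e₀ hlh hlchain, hlset]
  have h1 : {B : Finset (EdgeZ d) | IsMinimalCutset d n v w B ∧ B.card = m}.ncard ≤
      (decodeFun m '' ↑T).ncard :=
    Set.ncard_le_ncard hsub ((T.finite_toSet).image _)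
  have h2 := Set.ncard_image_le
    (s := (↑T : Set (EdgeZ d × (Fin (2*m) → Option (Sig d))))) (f := decodeFun m)
    T.finite_toSet
  have h3 : (↑T : Set (EdgeZ d × (Fin (2*m) → Option (Sig d)))).ncard = T.card :=
    Set.ncard_coe_finset T
  have h4 : T.card = A.card * Fintype.card (Fin (2*m) → Option (Sig d)) := by
    rw [hT, Finset.card_product, Finset.card_univ]
  have h5 : Fintype.card (Fin (2*m) → Option (Sig d)) = (3^d*d+1)^(2*m) := by
    rw [Fintype.card_fun, Fintype.card_option, Fintype.card_fin]
    congr 2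
    rw [Fintype.card_prod, Fintype.card_fun, Fintype.card_fin, Fintype.card_fin]
  have h6 : A.card ≤ 2 * (8*m+9)^d * d := by
    rw [hA, Finset.card_product, Finset.card_univ, Fintype.card_fin]
    have h7 := Finset.card_union_le (ballF v (r:ℤ)) (ballF w (r:ℤ))
    have h8 : (ballF v (r:ℤ)).card = (2*r+1)^d := card_ballF v r
    have h9 : (ballF w (r:ℤ)).card = (2*r+1)^d := card_ballF w r
    have h11 : 2*r+1 = 8*m+9 := by omega
    have h10 : (ballF v (r:ℤ) ∪ ballF w (r:ℤ)).card ≤ 2 * (8*m+9)^d := by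
      rw [← h11]
      omega
    exact Nat.mul_le_mul_right d h10
  have hfinal : A.card * Fintype.card (Fin (2*m) → Option (Sig d)) ≤
      (2 * (8*m+9)^d * d) * (3^d * d + 1)^(2*m) := by
    rw [h5]
    exact Nat.mul_le_mul_right _ h6
  omega

lemma arith (m : ℕ) (hm : 1 ≤ m) :
    (2 * (8*m+9)^d * d) * (3^d * d + 1)^(2*m) ≤ ((2*d*17^d) * 2^d * (3^d*d+1)^2)^m := by
  have h1 : 8*m+9 ≤ 17 * 2^m := by
    have hp : m < 2^m := Nat.lt_two_pow_self
    have : 8*m+9 ≤ 17*m := by omega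
    have h2 : 17*m ≤ 17*2^m := Nat.mul_le_mul_left 17 (le_of_lt hp)
    omega
  have h2 : (8*m+9)^d ≤ 17^d * (2^d)^m := by
    calc (8*m+9)^d ≤ (17*2^m)^d := Nat.pow_le_pow_left h1 d
    _ = 17^d * (2^m)^d := by rw [mul_pow]
    _ = 17^d * (2^d)^m := by rw [← pow_mul, ← pow_mul, Nat.mul_comm m d]
  have h4 : (3^d*d+1)^(2*m) = ((3^d*d+1)^2)^m := by rw [← pow_mul]
  have h5 : 2*(8*m+9)^d*d ≤ (2*d*17^d) * (2^d)^m := by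
    calc 2*(8*m+9)^d*d = 2*d*(8*m+9)^d := by ring
    _ ≤ 2*d*(17^d * (2^d)^m) := Nat.mul_le_mul_left (2*d) h2
    _ = (2*d*17^d) * (2^d)^m := by ring
  have h6 : 2*d*17^d ≤ (2*d*17^d)^m := Nat.le_self_pow (by omega) _
  calc (2 * (8*m+9)^d * d) * (3^d * d + 1)^(2*m)
      = (2*(8*m+9)^d*d) * ((3^d*d+1)^2)^m := by rw [h4]
    _ ≤ ((2*d*17^d) * (2^d)^m) * ((3^d*d+1)^2)^m := Nat.mul_le_mul_right _ h5
    _ ≤ (((2*d*17^d)^m * (2^d)^m)) * ((3^d*d+1)^2)^m :=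
        Nat.mul_le_mul_right _ (Nat.mul_le_mul_right _ h6)
    _ = ((2*d*17^d) * 2^d * (3^d*d+1)^2)^m := by rw [← mul_pow, ← mul_pow]

end
end CC

/-- For `d ≥ 2` the number of minimal cutsets of size `m` separating two
given vertices of `B_d(n)` is at most `c(d)^m`. -/
theorem count_minimal_cutsets (d : ℕ) (hd : 2 ≤ d) :
    ∃ c : ℕ, ∀ n m : ℕ, ∀ v w : Vert d, v ∈ boxFinset d n → w ∈ boxFinset d n →
      {B : Finset (EdgeZ d) | IsMinimalCutset d n v w B ∧ B.card = m}.ncard ≤ c ^ m := by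
  refine ⟨(2*d*17^d) * 2^d * (3^d*d+1)^2, ?_⟩
  intro n m v w hv hw
  rcases Nat.eq_zero_or_pos m with rfl | hm
  · have hsub : {B : Finset (EdgeZ d) | IsMinimalCutset d n v w B ∧ B.card = 0} ⊆
        {(∅ : Finset (EdgeZ d))} := by
      rintro B ⟨_, hc⟩
      simp [Finset.card_eq_zero.mp hc]
    calc {B : Finset (EdgeZ d) | IsMinimalCutset d n v w B ∧ B.card = 0}.ncard
        ≤ ({(∅ : Finset (EdgeZ d))} : Set (Finset (EdgeZ d))).ncard :=
          Set.ncard_le_ncard hsub (Set.finite_singleton _)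
      _ = 1 := Set.ncard_singleton _
      _ = ((2*d*17^d) * 2^d * (3^d*d+1)^2) ^ 0 := (pow_zero _).symm
  · exact le_trans (CC.main_count hd m hm v w hv hw) (CC.arith m hm)
end
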